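/- arXiv:1510.08290 — 7 statements merged into one kernel-verified Lean document; each statement's English description precedes it below -/
import Mathlib

section
/- Let s* ≥ 2 and let F be a real-valued random variable with E[F] = 0. If log E[exp(ν F)] ≤ |ν|^{s*} for all |ν| ≥ 1, then there exists a constant C (depending only on s*) such that log E[exp(ν F)] ≤ C(ν² + |ν|^{s*}) for all ν ∈ ℝ. -/
open MeasureTheory

lemma aux_exp_le (x : ℝ) : Real.exp x ≤ 1 + x + x ^ 2 * Real.exp |x| := by
  have h1 : Real.exp x * (1 - x) ≤ 1 := by
    have h := Real.add_one_le_exp (-x)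
    have := Real.exp_pos x
    nlinarith [Real.exp_neg x, mul_le_mul_of_nonneg_left h (le_of_lt (Real.exp_pos x)),
      (by rw [← Real.exp_add]; simp : Real.exp x * Real.exp (-x) = 1)]
  rcases le_or_gt 0 x with hx | hx
  · rw [abs_of_nonneg hx]
    have h2 : Real.exp x ≤ 1 + x * Real.exp x := by nlinarith
    nlinarith [mul_le_mul_of_nonneg_left h2 hx]
  · rw [abs_of_neg hx]
    have hone : (1:ℝ) ≤ Real.exp (-x) := Real.one_le_exp (by linarith)
    have h3 : Real.exp x ≤ 1 + x + x ^ 2 := by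
      have hcube : (1:ℝ) ≤ (1 + x + x ^ 2) * (1 - x) := by nlinarith [pow_pos (neg_pos.mpr hx) 3]
      have hpos : (0:ℝ) < 1 - x := by linarith
      nlinarith
    nlinarith [sq_nonneg x]

lemma aux_sq_le (x : ℝ) : x ^ 2 ≤ 4 * Real.exp |x| := by
  have h := Real.add_one_le_exp (|x|/2)
  have h2 : Real.exp |x| = Real.exp (|x|/2) ^ 2 := by
    rw [← Real.exp_nat_mul]; ring_nf
  nlinarith [abs_nonneg x, sq_abs x, Real.exp_pos (|x|/2)]

lemma aux_exp_abs_le (x : ℝ) : Real.exp |x| ≤ Real.exp x + Real.exp (-x) := by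
  rcases abs_cases x with ⟨h, _⟩ | ⟨h, _⟩ <;> rw [h] <;>
    nlinarith [Real.exp_pos x, Real.exp_pos (-x)]

/-- If a centered random variable `F` satisfies `log E[exp(ν F)] ≤ |ν|^{s*}` for all `|ν| ≥ 1`
(with `s* ≥ 2`), then `log E[exp(ν F)] ≤ C (ν² + |ν|^{s*})` for all `ν`, with `C = C(s*)`. -/
theorem stmt_0 (sStar : ℝ) (hs : 2 ≤ sStar) :
    ∃ C : ℝ, 0 < C ∧
      ∀ {Ω : Type} [MeasurableSpace Ω] (μ : Measure Ω) [IsProbabilityMeasure μ] (F : Ω → ℝ),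
        Integrable F μ →
        (∀ ν : ℝ, Integrable (fun ω => Real.exp (ν * F ω)) μ) →
        (∫ ω, F ω ∂μ) = 0 →
        (∀ ν : ℝ, 1 ≤ |ν| →
          Real.log (∫ ω, Real.exp (ν * F ω) ∂μ) ≤ |ν| ^ sStar) →
        ∀ ν : ℝ, Real.log (∫ ω, Real.exp (ν * F ω) ∂μ) ≤ C * (ν ^ 2 + |ν| ^ sStar) := by
  set M : ℝ := Real.exp ((2:ℝ) ^ sStar) with hM
  have hMpos : 0 < M := Real.exp_pos _
  refine ⟨16 * M + 1, by positivity, ?_⟩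
  intro Ω _ μ _ F hF hint hmean hbound ν
  -- lower bound 1 ≤ ∫ exp(lam * F)
  have hIlow : ∀ lam : ℝ, 1 ≤ ∫ ω, Real.exp (lam * F ω) ∂μ := by
    intro lam
    have hle : ∫ ω, (1 + lam * F ω) ∂μ ≤ ∫ ω, Real.exp (lam * F ω) ∂μ := by
      refine integral_mono ((integrable_const 1).add (hF.const_mul lam)) (hint lam) ?_
      intro ω
      have := Real.add_one_le_exp (lam * F ω)
      simpa using by linarith
    have heq : ∫ ω, (1 + lam * F ω) ∂μ = 1 := by
      rw [integral_add (integrable_const 1) (hF.const_mul lam), integral_const_mul, hmean]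
      simp
    linarith [heq ▸ hle]
  rcases le_or_gt 1 |ν| with hν | hν
  · -- large ν : use the hypothesis directly
    have h1 := hbound ν hν
    have h2 : (0:ℝ) ≤ |ν| ^ sStar := Real.rpow_nonneg (abs_nonneg ν) _
    nlinarith [sq_nonneg ν]
  · -- small ν : quadratic bound
    -- bound on ∫ exp(lam F) for |lam| ≤ 2
    have hB : ∀ lam : ℝ, |lam| ≤ 2 → ∫ ω, Real.exp (lam * F ω) ∂μ ≤ M := by
      intro lam hlam
      obtain ⟨hl1, hl2⟩ := abs_le.mp hlam
      have ht0 : (0:ℝ) ≤ (lam + 2) / 4 := by linarith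
      have ht1 : (lam + 2) / 4 ≤ 1 := by linarith
      set t : ℝ := (lam + 2) / 4 with ht
      have hpt : ∀ ω, Real.exp (lam * F ω) ≤
          t * Real.exp (2 * F ω) + (1 - t) * Real.exp (-2 * F ω) := by
        intro ω
        have hc : Real.exp (t * (2 * F ω) + (1 - t) * (-2 * F ω)) ≤
            t * Real.exp (2 * F ω) + (1 - t) * Real.exp (-2 * F ω) := by
          simpa [smul_eq_mul] using convexOn_exp.2 (Set.mem_univ (2 * F ω))
            (Set.mem_univ (-2 * F ω)) ht0 (by linarith) (by ring)
        have harg : t * (2 * F ω) + (1 - t) * (-2 * F ω) = lam * F ω := by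
          rw [ht]; ring
        rwa [harg] at hc
      have hle : ∫ ω, Real.exp (lam * F ω) ∂μ ≤
          ∫ ω, (t * Real.exp (2 * F ω) + (1 - t) * Real.exp (-2 * F ω)) ∂μ :=
        integral_mono (hint lam) (((hint 2).const_mul t).add ((hint (-2)).const_mul (1 - t)))
          hpt
      have heq : ∫ ω, (t * Real.exp (2 * F ω) + (1 - t) * Real.exp (-2 * F ω)) ∂μ
          = t * (∫ ω, Real.exp (2 * F ω) ∂μ) + (1 - t) * (∫ ω, Real.exp (-2 * F ω) ∂μ) := by
        rw [integral_add ((hint 2).const_mul t) ((hint (-2)).const_mul (1 - t)),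
          integral_const_mul, integral_const_mul]
      have hI2 : ∫ ω, Real.exp (2 * F ω) ∂μ ≤ M := by
        have h := hbound 2 (by norm_num)
        rw [show |(2:ℝ)| = 2 by norm_num] at h
        exact (Real.log_le_iff_le_exp (by linarith [hIlow 2])).mp h
      have hI2' : ∫ ω, Real.exp (-2 * F ω) ∂μ ≤ M := by
        have h := hbound (-2) (by norm_num)
        rw [show |(-2:ℝ)| = 2 by norm_num] at h
        exact (Real.log_le_iff_le_exp (by linarith [hIlow (-2)])).mp h
      nlinarith [hIlow 2, hIlow (-2)]
    -- pointwise bound for the small regime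
    have habs : ∀ a : ℝ, |a| ≤ 1 + |ν| → ∫ ω, Real.exp (a * F ω) ∂μ ≤ M := by
      intro a ha
      exact hB a (by linarith)
    have hpt : ∀ ω, Real.exp (ν * F ω) ≤ 1 + ν * F ω + 4 * ν ^ 2 *
        (Real.exp ((1 + ν) * F ω) + Real.exp ((1 - ν) * F ω)
          + Real.exp ((-1 + ν) * F ω) + Real.exp ((-1 - ν) * F ω)) := by
      intro ω
      set x := ν * F ω with hx
      have h1 := aux_exp_le x
      have h2 : x ^ 2 = ν ^ 2 * F ω ^ 2 := by rw [hx]; ring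
      have h3 := aux_sq_le (F ω)
      have h4 := aux_exp_abs_le x
      have h5 : F ω ^ 2 * Real.exp |x| ≤
          (4 * Real.exp |F ω|) * (Real.exp x + Real.exp (-x)) := by
        apply mul_le_mul h3 h4 (Real.exp_pos _).le (by positivity)
      have h6 : Real.exp |F ω| ≤ Real.exp (F ω) + Real.exp (-F ω) := aux_exp_abs_le (F ω)
      have h7 : (4 * Real.exp |F ω|) * (Real.exp x + Real.exp (-x)) ≤
          4 * (Real.exp (F ω) + Real.exp (-F ω)) * (Real.exp x + Real.exp (-x)) := by
        have : (0:ℝ) ≤ Real.exp x + Real.exp (-x) := by positivity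
        nlinarith
      have h8 : 4 * (Real.exp (F ω) + Real.exp (-F ω)) * (Real.exp x + Real.exp (-x)) =
          4 * (Real.exp ((1 + ν) * F ω) + Real.exp ((1 - ν) * F ω)
            + Real.exp ((-1 + ν) * F ω) + Real.exp ((-1 - ν) * F ω)) := by
        rw [hx]
        rw [show (1 + ν) * F ω = F ω + ν * F ω by ring,
          show (1 - ν) * F ω = F ω + -(ν * F ω) by ring,
          show (-1 + ν) * F ω = -F ω + ν * F ω by ring,
          show (-1 - ν) * F ω = -F ω + -(ν * F ω) by ring,
          Real.exp_add, Real.exp_add, Real.exp_add, Real.exp_add]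
        ring
      have h9 : x ^ 2 * Real.exp |x| ≤ ν ^ 2 * ((4 * Real.exp |F ω|) *
          (Real.exp x + Real.exp (-x))) := by
        rw [h2, mul_assoc]
        exact mul_le_mul_of_nonneg_left h5 (sq_nonneg ν)
      calc Real.exp x ≤ 1 + x + x ^ 2 * Real.exp |x| := h1
        _ ≤ 1 + x + ν ^ 2 * (4 * (Real.exp (F ω) + Real.exp (-F ω)) *
              (Real.exp x + Real.exp (-x))) := by
            have := mul_le_mul_of_nonneg_left h7 (sq_nonneg ν)
            linarith
        _ = 1 + ν * F ω + 4 * ν ^ 2 *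
            (Real.exp ((1 + ν) * F ω) + Real.exp ((1 - ν) * F ω)
              + Real.exp ((-1 + ν) * F ω) + Real.exp ((-1 - ν) * F ω)) := by
            rw [h8, hx]; ring
    -- integrate
    have hGint : Integrable (fun ω => Real.exp ((1 + ν) * F ω) + Real.exp ((1 - ν) * F ω)
        + Real.exp ((-1 + ν) * F ω) + Real.exp ((-1 - ν) * F ω)) μ :=
      (((hint (1 + ν)).add (hint (1 - ν))).add (hint (-1 + ν))).add (hint (-1 - ν))
    have hRint : Integrable (fun ω => 1 + ν * F ω + 4 * ν ^ 2 *
        (Real.exp ((1 + ν) * F ω) + Real.exp ((1 - ν) * F ω)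
          + Real.exp ((-1 + ν) * F ω) + Real.exp ((-1 - ν) * F ω))) μ :=
      ((integrable_const 1).add (hF.const_mul ν)).add (hGint.const_mul _)
    have hle : ∫ ω, Real.exp (ν * F ω) ∂μ ≤ ∫ ω, (1 + ν * F ω + 4 * ν ^ 2 *
        (Real.exp ((1 + ν) * F ω) + Real.exp ((1 - ν) * F ω)
          + Real.exp ((-1 + ν) * F ω) + Real.exp ((-1 - ν) * F ω))) ∂μ :=
      integral_mono (hint ν) hRint hpt
    have heq : ∫ ω, (1 + ν * F ω + 4 * ν ^ 2 *
        (Real.exp ((1 + ν) * F ω) + Real.exp ((1 - ν) * F ω)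
          + Real.exp ((-1 + ν) * F ω) + Real.exp ((-1 - ν) * F ω))) ∂μ
        = 1 + 4 * ν ^ 2 * ∫ ω, (Real.exp ((1 + ν) * F ω) + Real.exp ((1 - ν) * F ω)
          + Real.exp ((-1 + ν) * F ω) + Real.exp ((-1 - ν) * F ω)) ∂μ := by
      have hA : Integrable (fun ω => 1 + ν * F ω) μ := (integrable_const 1).add (hF.const_mul ν)
      have hC : Integrable (fun ω => 4 * ν ^ 2 *
          (Real.exp ((1 + ν) * F ω) + Real.exp ((1 - ν) * F ω)
            + Real.exp ((-1 + ν) * F ω) + Real.exp ((-1 - ν) * F ω))) μ := hGint.const_mul _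
      rw [integral_add hA hC, integral_add (integrable_const 1) (hF.const_mul ν),
        integral_const_mul, integral_const_mul, hmean]
      simp
    have hGsum : ∫ ω, (Real.exp ((1 + ν) * F ω) + Real.exp ((1 - ν) * F ω)
          + Real.exp ((-1 + ν) * F ω) + Real.exp ((-1 - ν) * F ω)) ∂μ ≤ 4 * M := by
      have hG3 : Integrable (fun ω => Real.exp ((1 + ν) * F ω) + Real.exp ((1 - ν) * F ω)
          + Real.exp ((-1 + ν) * F ω)) μ := ((hint _).add (hint _)).add (hint _)
      have hG2 : Integrable (fun ω => Real.exp ((1 + ν) * F ω)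
          + Real.exp ((1 - ν) * F ω)) μ := (hint _).add (hint _)
      rw [integral_add hG3 (hint (-1 - ν)), integral_add hG2 (hint (-1 + ν)),
        integral_add (hint (1 + ν)) (hint (1 - ν))]
      have hv := abs_lt.mp hν
      have b1 := hB (1 + ν) (by rw [abs_le]; constructor <;> linarith)
      have b2 := hB (1 - ν) (by rw [abs_le]; constructor <;> linarith)
      have b3 := hB (-1 + ν) (by rw [abs_le]; constructor <;> linarith)
      have b4 := hB (-1 - ν) (by rw [abs_le]; constructor <;> linarith)
      linarith
    have hkey : ∫ ω, Real.exp (ν * F ω) ∂μ ≤ 1 + 16 * M * ν ^ 2 := by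
      have h4ν : (0:ℝ) ≤ 4 * ν ^ 2 := by positivity
      nlinarith [hle, heq, hGsum]
    have hlog : Real.log (∫ ω, Real.exp (ν * F ω) ∂μ) ≤ 16 * M * ν ^ 2 := by
      have hpos : 0 < ∫ ω, Real.exp (ν * F ω) ∂μ := lt_of_lt_of_le one_pos (hIlow ν)
      have := Real.log_le_sub_one_of_pos hpos
      linarith
    have hrnn : (0:ℝ) ≤ |ν| ^ sStar := Real.rpow_nonneg (abs_nonneg ν) _
    nlinarith [sq_nonneg ν]
end

section
/- Let η_R(x) = R^{−d} exp(−|x|/R) on ℝ^d and let G_r denote the centered Gaussian kernel of scale r, G_r(x) = r^{−d}(2π)^{−d/2} exp(−|x/r|²/2). For any nonnegative measurable function f and scales r ≤ R/2, one has ∫ η_R (f * G_r) ≤ C ∫ η_R f and ∫ η_R f ≤ C ∫ η_R (f * G_r), with a constant C depending only on d. -/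
open MeasureTheory Real
open scoped ENNReal

/-- The exponential localization kernel `η_R(x) = R^{−d} exp(−|x|/R)`. -/
noncomputable def expKer (d : ℕ) (R : ℝ) (x : EuclideanSpace ℝ (Fin d)) : ℝ :=
  R ^ (-(d : ℝ)) * Real.exp (-‖x‖ / R)

/-- The Gaussian kernel `G_r(x) = r^{−d} (2π)^{−d/2} exp(−|x/r|²/2)`. -/
noncomputable def gaussKer (d : ℕ) (r : ℝ) (x : EuclideanSpace ℝ (Fin d)) : ℝ :=
  r ^ (-(d : ℝ)) * (2 * Real.pi) ^ (-(d : ℝ) / 2) * Real.exp (-(‖x‖ / r) ^ 2 / 2)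

namespace Stmt6Aux

abbrev E (d : ℕ) := EuclideanSpace ℝ (Fin d)

lemma core (r R t : ℝ) (hr : 0 < r) (hrR : r ≤ R / 2) (ht : 0 ≤ t) :
    t / R ≤ 4⁻¹ + t ^ 2 / (4 * r ^ 2) := by
  have h1 : t / R ≤ t / (2 * r) :=
    div_le_div_of_nonneg_left ht (by linarith) (by linarith)
  have h2 : (t / (2 * r)) ^ 2 = t ^ 2 / (4 * r ^ 2) := by
    rw [div_pow]; congr 1; ring
  nlinarith [sq_nonneg (t / (2 * r) - 2⁻¹)]

lemma intgauss {d : ℕ} (b : ℝ) (hb : 0 < b) :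
    Integrable (fun v : E d => Real.exp (-(b * ‖v‖ ^ 2))) := by
  have h := (GaussianFourier.integrable_cexp_neg_mul_sq_norm_add
    (b := (b : ℂ)) (by simpa using hb) 0 (0 : E d)).norm
  refine h.congr (Filter.Eventually.of_forall fun v => ?_)
  simp only [Complex.norm_exp]
  norm_num
  exact Or.inl (by rw [← Complex.ofReal_pow, Complex.ofReal_re])

lemma gaussLint (d : ℕ) (a : ℝ) (ha : 0 < a) :
    ∫⁻ z : E d, ENNReal.ofReal (Real.exp (-(‖z‖ ^ 2 / a)))
      = ENNReal.ofReal ((π * a) ^ ((d : ℝ) / 2)) := by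
  have hb : 0 < a⁻¹ := by positivity
  have h1 : ∀ z : E d, -(‖z‖ ^ 2 / a) = -(a⁻¹ * ‖z‖ ^ 2) := by
    intro z; rw [div_eq_inv_mul]
  simp_rw [h1]
  rw [← ofReal_integral_eq_lintegral_ofReal (intgauss a⁻¹ hb)
    (Filter.Eventually.of_forall fun v => (Real.exp_pos _).le)]
  congr 1
  have := GaussianFourier.integral_rexp_neg_mul_sq_norm (V := E d) hb
  simp_rw [neg_mul] at this
  rw [this, finrank_euclideanSpace_fin, div_inv_eq_mul]

lemma exp_upper (r R s u t : ℝ) (hr : 0 < r) (hrR : r ≤ R / 2) (ht : 0 ≤ t)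
    (hsu : s - u ≤ t) :
    Real.exp (-u / R) * Real.exp (-(t / r) ^ 2 / 2) ≤
      Real.exp 4⁻¹ * Real.exp (-s / R) * Real.exp (-(t ^ 2 / (4 * r ^ 2))) := by
  rw [← Real.exp_add, ← Real.exp_add, ← Real.exp_add]
  apply Real.exp_le_exp.2
  have hR : 0 < R := by linarith
  have h1 : t / R ≤ 4⁻¹ + t ^ 2 / (4 * r ^ 2) := core r R t hr hrR ht
  have h2 : (s - u) / R ≤ t / R := by gcongr
  have h3 : (t / r) ^ 2 / 2 = 2 * (t ^ 2 / (4 * r ^ 2)) := by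
    rw [div_pow]; field_simp; ring
  have h3' : (-(t / r)) ^ 2 = (t / r) ^ 2 := neg_pow_two _
  have h4 : (s - u) / R = s / R - u / R := sub_div s u R
  have h5 : -u / R = -(u / R) := neg_div R u
  have h6 : -s / R = -(s / R) := neg_div R s
  linarith

lemma exp_lower (r R s u t : ℝ) (hr : 0 < r) (hrR : r ≤ R / 2) (ht : 0 ≤ t)
    (hus : u - s ≤ t) :
    Real.exp (-4⁻¹) * Real.exp (-s / R) * Real.exp (-(t ^ 2 / (4 * r ^ 2 / 3))) ≤
      Real.exp (-u / R) * Real.exp (-(t / r) ^ 2 / 2) := by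
  rw [← Real.exp_add, ← Real.exp_add, ← Real.exp_add]
  apply Real.exp_le_exp.2
  have hR : 0 < R := by linarith
  have h1 : t / R ≤ 4⁻¹ + t ^ 2 / (4 * r ^ 2) := core r R t hr hrR ht
  have h2 : (u - s) / R ≤ t / R := by gcongr
  have h3 : (t / r) ^ 2 / 2 = 2 * (t ^ 2 / (4 * r ^ 2)) := by
    rw [div_pow]; field_simp; ring
  have h3' : (-(t / r)) ^ 2 = (t / r) ^ 2 := neg_pow_two _
  have h4 : (u - s) / R = u / R - s / R := sub_div u s R
  have h5 : t ^ 2 / (4 * r ^ 2 / 3) = 3 * (t ^ 2 / (4 * r ^ 2)) := by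
    field_simp
  have h6 : -u / R = -(u / R) := neg_div R u
  have h7 : -s / R = -(s / R) := neg_div R s
  linarith

lemma rpow_sq (d : ℕ) (r : ℝ) (hr : 0 < r) :
    ((r : ℝ) ^ 2) ^ ((d : ℝ) / 2) = r ^ (d : ℝ) := by
  rw [← Real.rpow_natCast r 2, ← Real.rpow_mul hr.le]
  congr 1
  push_cast; ring

lemma const_up (d : ℕ) (r : ℝ) (hr : 0 < r) :
    Real.exp 4⁻¹ * (r ^ (-(d : ℝ)) * (2 * π) ^ (-(d : ℝ) / 2)) *
      (π * (4 * r ^ 2)) ^ ((d : ℝ) / 2) = Real.exp 4⁻¹ * 2 ^ ((d : ℝ) / 2) := by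
  have h2π : (0 : ℝ) < 2 * π := by positivity
  have hA : (π * (4 * r ^ 2)) ^ ((d : ℝ) / 2) =
      (2 * π) ^ ((d : ℝ) / 2) * ((2 : ℝ) ^ ((d : ℝ) / 2) * r ^ (d : ℝ)) := by
    rw [show π * (4 * r ^ 2) = (2 * π) * (2 * r ^ 2) by ring,
      Real.mul_rpow h2π.le (by positivity)]
    congr 1
    rw [Real.mul_rpow (by norm_num : (0:ℝ) ≤ 2) (by positivity), rpow_sq d r hr]
  rw [hA]
  have h3 : r ^ (-(d : ℝ)) * r ^ (d : ℝ) = 1 := by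
    rw [← Real.rpow_add hr, neg_add_cancel, Real.rpow_zero]
  have h4 : (2 * π) ^ (-(d : ℝ) / 2) * (2 * π) ^ ((d : ℝ) / 2) = 1 := by
    rw [← Real.rpow_add h2π, show -(d:ℝ) / 2 + (d:ℝ) / 2 = 0 by ring, Real.rpow_zero]
  calc Real.exp 4⁻¹ * (r ^ (-(d : ℝ)) * (2 * π) ^ (-(d : ℝ) / 2)) *
        ((2 * π) ^ ((d : ℝ) / 2) * ((2:ℝ) ^ ((d : ℝ) / 2) * r ^ (d : ℝ)))
      = Real.exp 4⁻¹ * 2 ^ ((d : ℝ) / 2) * (r ^ (-(d : ℝ)) * r ^ (d : ℝ)) *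
        ((2 * π) ^ (-(d : ℝ) / 2) * (2 * π) ^ ((d : ℝ) / 2)) := by ring
    _ = Real.exp 4⁻¹ * 2 ^ ((d : ℝ) / 2) := by rw [h3, h4]; ring

lemma const_lo (d : ℕ) (r : ℝ) (hr : 0 < r) :
    Real.exp (-4⁻¹) * (r ^ (-(d : ℝ)) * (2 * π) ^ (-(d : ℝ) / 2)) *
      (π * (4 * r ^ 2 / 3)) ^ ((d : ℝ) / 2)
      = Real.exp (-4⁻¹) * (2 / 3 : ℝ) ^ ((d : ℝ) / 2) := by
  have h2π : (0 : ℝ) < 2 * π := by positivity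
  have hA : (π * (4 * r ^ 2 / 3)) ^ ((d : ℝ) / 2) =
      (2 * π) ^ ((d : ℝ) / 2) * ((2 / 3 : ℝ) ^ ((d : ℝ) / 2) * r ^ (d : ℝ)) := by
    rw [show π * (4 * r ^ 2 / 3) = (2 * π) * ((2 / 3) * r ^ 2) by ring,
      Real.mul_rpow h2π.le (by positivity)]
    congr 1
    rw [Real.mul_rpow (by norm_num : (0:ℝ) ≤ 2/3) (by positivity), rpow_sq d r hr]
  rw [hA]
  have h3 : r ^ (-(d : ℝ)) * r ^ (d : ℝ) = 1 := by
    rw [← Real.rpow_add hr, neg_add_cancel, Real.rpow_zero]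
  have h4 : (2 * π) ^ (-(d : ℝ) / 2) * (2 * π) ^ ((d : ℝ) / 2) = 1 := by
    rw [← Real.rpow_add h2π, show -(d:ℝ) / 2 + (d:ℝ) / 2 = 0 by ring, Real.rpow_zero]
  calc Real.exp (-4⁻¹) * (r ^ (-(d : ℝ)) * (2 * π) ^ (-(d : ℝ) / 2)) *
        ((2 * π) ^ ((d : ℝ) / 2) * ((2 / 3 : ℝ) ^ ((d : ℝ) / 2) * r ^ (d : ℝ)))
      = Real.exp (-4⁻¹) * (2 / 3 : ℝ) ^ ((d : ℝ) / 2) * (r ^ (-(d : ℝ)) * r ^ (d : ℝ)) *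
        ((2 * π) ^ (-(d : ℝ) / 2) * (2 * π) ^ ((d : ℝ) / 2)) := by ring
    _ = _ := by rw [h3, h4]; ring

lemma expKer_nonneg (d : ℕ) {R : ℝ} (hR : 0 < R) (x : E d) : 0 ≤ expKer d R x := by
  unfold expKer
  positivity

lemma meas_expKer (d : ℕ) (R : ℝ) : Measurable (expKer d R) := by
  unfold expKer; fun_prop

lemma meas_gaussKer (d : ℕ) (r : ℝ) : Measurable (gaussKer d r) := by
  unfold gaussKer; fun_prop

lemma ker_upper (d : ℕ) (r R : ℝ) (hr : 0 < r) (hrR : r ≤ R / 2)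
    (x y : E d) :
    expKer d R x * gaussKer d r (x - y) ≤
      expKer d R y * ((Real.exp 4⁻¹ * (r ^ (-(d : ℝ)) * (2 * π) ^ (-(d : ℝ) / 2))) *
        Real.exp (-(‖x - y‖ ^ 2 / (4 * r ^ 2)))) := by
  have hR : 0 < R := by linarith
  have h := exp_upper r R ‖y‖ ‖x‖ ‖x - y‖ hr hrR (norm_nonneg _)
    (by simpa [norm_sub_rev x y] using norm_sub_norm_le y x)
  have hc : (0 : ℝ) ≤ R ^ (-(d : ℝ)) * (r ^ (-(d : ℝ)) * (2 * π) ^ (-(d : ℝ) / 2)) := by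
    positivity
  have key := mul_le_mul_of_nonneg_left h hc
  calc expKer d R x * gaussKer d r (x - y)
      = R ^ (-(d : ℝ)) * (r ^ (-(d : ℝ)) * (2 * π) ^ (-(d : ℝ) / 2)) *
        (Real.exp (-‖x‖ / R) * Real.exp (-(‖x - y‖ / r) ^ 2 / 2)) := by
        unfold expKer gaussKer; ring
    _ ≤ R ^ (-(d : ℝ)) * (r ^ (-(d : ℝ)) * (2 * π) ^ (-(d : ℝ) / 2)) *
        (Real.exp 4⁻¹ * Real.exp (-‖y‖ / R) * Real.exp (-(‖x - y‖ ^ 2 / (4 * r ^ 2)))) := key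
    _ = _ := by unfold expKer; ring

lemma ker_lower (d : ℕ) (r R : ℝ) (hr : 0 < r) (hrR : r ≤ R / 2)
    (x y : E d) :
    expKer d R y * ((Real.exp (-4⁻¹) * (r ^ (-(d : ℝ)) * (2 * π) ^ (-(d : ℝ) / 2))) *
        Real.exp (-(‖x - y‖ ^ 2 / (4 * r ^ 2 / 3)))) ≤
      expKer d R x * gaussKer d r (x - y) := by
  have hR : 0 < R := by linarith
  have h := exp_lower r R ‖y‖ ‖x‖ ‖x - y‖ hr hrR (norm_nonneg _)
    (norm_sub_norm_le x y)
  have hc : (0 : ℝ) ≤ R ^ (-(d : ℝ)) * (r ^ (-(d : ℝ)) * (2 * π) ^ (-(d : ℝ) / 2)) := by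
    positivity
  have key := mul_le_mul_of_nonneg_left h hc
  calc expKer d R y * ((Real.exp (-4⁻¹) * (r ^ (-(d : ℝ)) * (2 * π) ^ (-(d : ℝ) / 2))) *
        Real.exp (-(‖x - y‖ ^ 2 / (4 * r ^ 2 / 3))))
      = R ^ (-(d : ℝ)) * (r ^ (-(d : ℝ)) * (2 * π) ^ (-(d : ℝ) / 2)) *
        (Real.exp (-4⁻¹) * Real.exp (-‖y‖ / R) *
          Real.exp (-(‖x - y‖ ^ 2 / (4 * r ^ 2 / 3)))) := by
        unfold expKer; ring
    _ ≤ R ^ (-(d : ℝ)) * (r ^ (-(d : ℝ)) * (2 * π) ^ (-(d : ℝ) / 2)) *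
        (Real.exp (-‖x‖ / R) * Real.exp (-(‖x - y‖ / r) ^ 2 / 2)) := key
    _ = _ := by unfold expKer gaussKer; ring

lemma conv_upper (d : ℕ) (r R : ℝ) (hr : 0 < r) (hrR : r ≤ R / 2) (y : E d) :
    (∫⁻ x, ENNReal.ofReal (expKer d R x) * ENNReal.ofReal (gaussKer d r (x - y)))
      ≤ ENNReal.ofReal (Real.exp 4⁻¹ * 2 ^ ((d : ℝ) / 2)) *
        ENNReal.ofReal (expKer d R y) := by
  have hR : 0 < R := by linarith
  set A : ℝ := Real.exp 4⁻¹ * (r ^ (-(d : ℝ)) * (2 * π) ^ (-(d : ℝ) / 2)) with hA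
  have hA0 : 0 ≤ A := by rw [hA]; positivity
  have hη0 : 0 ≤ expKer d R y := expKer_nonneg d hR y
  calc (∫⁻ x, ENNReal.ofReal (expKer d R x) * ENNReal.ofReal (gaussKer d r (x - y)))
      = ∫⁻ x, ENNReal.ofReal (expKer d R x * gaussKer d r (x - y)) := by
        simp_rw [← ENNReal.ofReal_mul (expKer_nonneg d hR _)]
    _ ≤ ∫⁻ x, ENNReal.ofReal ((expKer d R y * A) *
          Real.exp (-(‖x - y‖ ^ 2 / (4 * r ^ 2)))) := by
        refine lintegral_mono fun x => ENNReal.ofReal_le_ofReal ?_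
        rw [mul_assoc]
        exact ker_upper d r R hr hrR x y
    _ = ENNReal.ofReal (expKer d R y * A) *
          ∫⁻ x, ENNReal.ofReal (Real.exp (-(‖x - y‖ ^ 2 / (4 * r ^ 2)))) := by
        simp_rw [ENNReal.ofReal_mul (mul_nonneg hη0 hA0)]
        exact lintegral_const_mul' _ _ ENNReal.ofReal_ne_top
    _ = ENNReal.ofReal (expKer d R y * A) *
          ENNReal.ofReal ((π * (4 * r ^ 2)) ^ ((d : ℝ) / 2)) := by
        rw [lintegral_sub_right_eq_self
          (fun z => ENNReal.ofReal (Real.exp (-(‖z‖ ^ 2 / (4 * r ^ 2))))) y,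
          gaussLint d (4 * r ^ 2) (by positivity)]
    _ = ENNReal.ofReal (Real.exp 4⁻¹ * 2 ^ ((d : ℝ) / 2)) *
          ENNReal.ofReal (expKer d R y) := by
        rw [← ENNReal.ofReal_mul (mul_nonneg hη0 hA0),
          ← ENNReal.ofReal_mul (by positivity)]
        congr 1
        rw [← const_up d r hr, hA]
        ring

lemma conv_lower (d : ℕ) (r R : ℝ) (hr : 0 < r) (hrR : r ≤ R / 2) (y : E d) :
    ENNReal.ofReal (Real.exp (-4⁻¹) * (2 / 3 : ℝ) ^ ((d : ℝ) / 2)) *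
        ENNReal.ofReal (expKer d R y)
      ≤ ∫⁻ x, ENNReal.ofReal (expKer d R x) * ENNReal.ofReal (gaussKer d r (x - y)) := by
  have hR : 0 < R := by linarith
  set A : ℝ := Real.exp (-4⁻¹) * (r ^ (-(d : ℝ)) * (2 * π) ^ (-(d : ℝ) / 2)) with hA
  have hA0 : 0 ≤ A := by rw [hA]; positivity
  have hη0 : 0 ≤ expKer d R y := expKer_nonneg d hR y
  calc ENNReal.ofReal (Real.exp (-4⁻¹) * (2 / 3 : ℝ) ^ ((d : ℝ) / 2)) *
        ENNReal.ofReal (expKer d R y)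
      = ENNReal.ofReal (expKer d R y * A) *
          ENNReal.ofReal ((π * (4 * r ^ 2 / 3)) ^ ((d : ℝ) / 2)) := by
        rw [← ENNReal.ofReal_mul (mul_nonneg hη0 hA0),
          ← ENNReal.ofReal_mul (by positivity)]
        congr 1
        rw [← const_lo d r hr, hA]
        ring
    _ = ENNReal.ofReal (expKer d R y * A) *
          ∫⁻ x, ENNReal.ofReal (Real.exp (-(‖x - y‖ ^ 2 / (4 * r ^ 2 / 3)))) := by
        rw [lintegral_sub_right_eq_self
          (fun z => ENNReal.ofReal (Real.exp (-(‖z‖ ^ 2 / (4 * r ^ 2 / 3))))) y,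
          gaussLint d (4 * r ^ 2 / 3) (by positivity)]
    _ = ∫⁻ x, ENNReal.ofReal ((expKer d R y * A) *
          Real.exp (-(‖x - y‖ ^ 2 / (4 * r ^ 2 / 3)))) := by
        simp_rw [ENNReal.ofReal_mul (mul_nonneg hη0 hA0)]
        exact (lintegral_const_mul' _ _ ENNReal.ofReal_ne_top).symm
    _ ≤ ∫⁻ x, ENNReal.ofReal (expKer d R x * gaussKer d r (x - y)) := by
        refine lintegral_mono fun x => ENNReal.ofReal_le_ofReal ?_
        rw [mul_assoc]
        exact ker_lower d r R hr hrR x y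
    _ = ∫⁻ x, ENNReal.ofReal (expKer d R x) * ENNReal.ofReal (gaussKer d r (x - y)) := by
        simp_rw [← ENNReal.ofReal_mul (expKer_nonneg d hR _)]

end Stmt6Aux

open Stmt6Aux in
/-- For every nonnegative measurable `f` and scales `0 < r ≤ R/2`:
`∫ η_R (f * G_r) ∼ ∫ η_R f`, with constants depending only on `d`. -/
theorem stmt_6 (d : ℕ) (hd : 0 < d) :
    ∃ C : ℝ≥0∞, 0 < C ∧ C < ⊤ ∧
      ∀ (f : EuclideanSpace ℝ (Fin d) → ℝ≥0∞), Measurable f →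
      ∀ r R : ℝ, 0 < r → r ≤ R / 2 →
      (∫⁻ x, ENNReal.ofReal (expKer d R x) *
          ∫⁻ y, f y * ENNReal.ofReal (gaussKer d r (x - y)))
        ≤ C * ∫⁻ x, ENNReal.ofReal (expKer d R x) * f x ∧
      (∫⁻ x, ENNReal.ofReal (expKer d R x) * f x)
        ≤ C * ∫⁻ x, ENNReal.ofReal (expKer d R x) *
            ∫⁻ y, f y * ENNReal.ofReal (gaussKer d r (x - y)) := by
  set cup : ℝ≥0∞ := ENNReal.ofReal (Real.exp 4⁻¹ * 2 ^ ((d : ℝ) / 2)) with hcup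
  set clo : ℝ≥0∞ := ENNReal.ofReal (Real.exp (-4⁻¹) * (2 / 3 : ℝ) ^ ((d : ℝ) / 2)) with hclo
  have hclo0 : clo ≠ 0 := by
    rw [hclo]
    simp only [ne_eq, ENNReal.ofReal_eq_zero, not_le]
    positivity
  refine ⟨cup ⊔ clo⁻¹, ?_, ?_, ?_⟩
  · refine lt_of_lt_of_le ?_ le_sup_left
    rw [hcup]
    exact ENNReal.ofReal_pos.2 (by positivity)
  · refine max_lt ENNReal.ofReal_lt_top ?_
    exact ENNReal.inv_lt_top.2 (pos_iff_ne_zero.2 hclo0)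
  · intro f hf r R hr hrR
    have hprod : Measurable (fun p : E d × E d =>
        ENNReal.ofReal (expKer d R p.1) *
          (f p.2 * ENNReal.ofReal (gaussKer d r (p.1 - p.2)))) := by
      refine ((ENNReal.measurable_ofReal.comp ((meas_expKer d R).comp measurable_fst))).mul ?_
      exact (hf.comp measurable_snd).mul (ENNReal.measurable_ofReal.comp
        ((meas_gaussKer d r).comp (measurable_fst.sub measurable_snd)))
    have hswap : (∫⁻ x, ENNReal.ofReal (expKer d R x) *
          ∫⁻ y, f y * ENNReal.ofReal (gaussKer d r (x - y)))
        = ∫⁻ y, f y * ∫⁻ x, ENNReal.ofReal (expKer d R x) *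
            ENNReal.ofReal (gaussKer d r (x - y)) := by
      have e1 : ∀ x : E d, ENNReal.ofReal (expKer d R x) *
            ∫⁻ y, f y * ENNReal.ofReal (gaussKer d r (x - y))
          = ∫⁻ y, ENNReal.ofReal (expKer d R x) *
              (f y * ENNReal.ofReal (gaussKer d r (x - y))) :=
        fun x => (lintegral_const_mul' _ _ ENNReal.ofReal_ne_top).symm
      simp_rw [e1]
      rw [lintegral_lintegral_swap hprod.aemeasurable]
      refine lintegral_congr fun y => ?_
      have e2 : ∀ x : E d, ENNReal.ofReal (expKer d R x) *
            (f y * ENNReal.ofReal (gaussKer d r (x - y)))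
          = f y * (ENNReal.ofReal (expKer d R x) *
              ENNReal.ofReal (gaussKer d r (x - y))) := fun x => by ring
      simp_rw [e2]
      refine lintegral_const_mul'' (f y) ?_
      exact ((ENNReal.measurable_ofReal.comp (meas_expKer d R)).mul
        (ENNReal.measurable_ofReal.comp ((meas_gaussKer d r).comp
          (measurable_id.sub measurable_const)))).aemeasurable
    constructor
    · rw [hswap]
      calc (∫⁻ y, f y * ∫⁻ x, ENNReal.ofReal (expKer d R x) *
              ENNReal.ofReal (gaussKer d r (x - y)))
          ≤ ∫⁻ y, f y * (cup * ENNReal.ofReal (expKer d R y)) :=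
            lintegral_mono fun y => mul_le_mul_right (conv_upper d r R hr hrR y) _
        _ = cup * ∫⁻ x, ENNReal.ofReal (expKer d R x) * f x := by
            have e3 : ∀ y : E d, f y * (cup * ENNReal.ofReal (expKer d R y))
                = cup * (ENNReal.ofReal (expKer d R y) * f y) := fun y => by ring
            simp_rw [e3]
            exact lintegral_const_mul' _ _ ENNReal.ofReal_ne_top
        _ ≤ (cup ⊔ clo⁻¹) * ∫⁻ x, ENNReal.ofReal (expKer d R x) * f x :=
            mul_le_mul_left le_sup_left _
    · have h1 : clo * ∫⁻ x, ENNReal.ofReal (expKer d R x) * f x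
          ≤ ∫⁻ y, f y * ∫⁻ x, ENNReal.ofReal (expKer d R x) *
              ENNReal.ofReal (gaussKer d r (x - y)) := by
        rw [← lintegral_const_mul' _ _ ENNReal.ofReal_ne_top]
        refine lintegral_mono fun y => ?_
        calc clo * (ENNReal.ofReal (expKer d R y) * f y)
            = f y * (clo * ENNReal.ofReal (expKer d R y)) := by ring
          _ ≤ f y * ∫⁻ x, ENNReal.ofReal (expKer d R x) *
                ENNReal.ofReal (gaussKer d r (x - y)) :=
              mul_le_mul_right (conv_lower d r R hr hrR y) _
      calc (∫⁻ x, ENNReal.ofReal (expKer d R x) * f x)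
          = clo⁻¹ * (clo * ∫⁻ x, ENNReal.ofReal (expKer d R x) * f x) := by
            rw [← mul_assoc, ENNReal.inv_mul_cancel hclo0 ENNReal.ofReal_ne_top, one_mul]
        _ ≤ clo⁻¹ * ∫⁻ y, f y * ∫⁻ x, ENNReal.ofReal (expKer d R x) *
              ENNReal.ofReal (gaussKer d r (x - y)) := mul_le_mul_right h1 _
        _ = clo⁻¹ * ∫⁻ x, ENNReal.ofReal (expKer d R x) *
              ∫⁻ y, f y * ENNReal.ofReal (gaussKer d r (x - y)) := by rw [hswap]
        _ ≤ (cup ⊔ clo⁻¹) * ∫⁻ x, ENNReal.ofReal (expKer d R x) *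
              ∫⁻ y, f y * ENNReal.ofReal (gaussKer d r (x - y)) :=
            mul_le_mul_left le_sup_right _
end

section
/- Let f : [0,1] → ℝ be m-times continuously differentiable, let α ≥ 0 and m ∈ ℕ with α + 1 < m. Then sup_{t∈[0,1]} |f(t)| ≤ C ∑_{k=0}^{m} ∫_0^1 t^α |f^{(k)}(t)| dt for a constant C depending only on m and α. -/
open intervalIntegral MeasureTheory Set

set_option maxHeartbeats 2000000 in
/-- Weighted Sobolev estimate in one variable: for `α + 1 < m`,
`sup_{[0,1]} |f| ≤ C ∑_{k=0}^{m} ∫_0^1 t^α |f^{(k)}(t)| dt` for all `C^m` functions `f`. -/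
theorem stmt_8 (m : ℕ) (α : ℝ) (hα : 0 ≤ α) (h : α + 1 < m) :
    ∃ C : ℝ, 0 < C ∧ ∀ f : ℝ → ℝ, ContDiff ℝ m f →
      ∀ t ∈ Set.Icc (0 : ℝ) 1, |f t| ≤
        C * ∑ k ∈ Finset.range (m + 1), ∫ s in (0 : ℝ)..1, s ^ α * |iteratedDeriv k f s| := by
  have h2α : (0:ℝ) < 2 ^ α := Real.rpow_pos_of_pos (by norm_num) α
  have h2α1 : (0:ℝ) < 2 ^ (α+1) := Real.rpow_pos_of_pos (by norm_num) (α+1)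
  set D : ℝ := 2 ^ (α+1) + 2 ^ α with hD
  have hDpos : 0 < D := by positivity
  have hm2 : 2 ≤ m := by
    by_contra hc
    interval_cases m <;> simp_all <;> linarith
  refine ⟨D + m * (D + 1) + 1, by positivity, ?_⟩
  intro f hf
  set g : ℕ → ℝ → ℝ := fun k => iteratedDeriv k f with hg
  have hgc : ∀ k, k ≤ m → Continuous (g k) := fun k hk =>
    hf.continuous_iteratedDeriv k (by exact_mod_cast hk)
  have hgd : ∀ k, k < m → ∀ x : ℝ, HasDerivAt (g k) (g (k+1) x) x := by
    intro k hk x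
    have hd := (hf.differentiable_iteratedDeriv k (by exact_mod_cast hk)) x
    rw [hg]
    simp only [iteratedDeriv_succ]
    exact hd.hasDerivAt
  have hwc : Continuous fun s : ℝ => s ^ α := Real.continuous_rpow_const hα
  set W : ℕ → ℝ := fun k => ∫ s in (0:ℝ)..1, s ^ α * |g k s| with hW
  set S : ℝ := ∑ k ∈ Finset.range (m + 1), ∫ s in (0:ℝ)..1, s ^ α * |iteratedDeriv k f s| with hS
  have hWnn : ∀ k, 0 ≤ W k := by
    intro k
    apply intervalIntegral.integral_nonneg zero_le_one
    intro u hu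
    exact mul_nonneg (Real.rpow_nonneg hu.1 α) (abs_nonneg _)
  have hWS : ∀ k, k ≤ m → W k ≤ S := by
    intro k hk
    exact Finset.single_le_sum (f := fun k => ∫ s in (0:ℝ)..1, s ^ α * |iteratedDeriv k f s|)
      (fun i _ => hWnn i) (Finset.mem_range.mpr (Nat.lt_succ_of_le hk))
  have hSnn : 0 ≤ S := le_trans (hWnn 0) (hWS 0 (by omega))
  -- FTC
  have ftc : ∀ k, k < m → ∀ a b : ℝ, (∫ u in a..b, g (k+1) u) = g k b - g k a := by
    intro k hk a b
    exact intervalIntegral.integral_eq_sub_of_hasDerivAt (fun x _ => hgd k hk x)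
      ((hgc (k+1) hk).intervalIntegrable a b)
  have key1 : ∀ k, k < m → ∀ s : ℝ, 0 ≤ s → s ≤ 1 →
      |g k 1 - g k s| ≤ ∫ u in s..1, |g (k+1) u| := by
    intro k hk s hs0 hs1
    rw [← ftc k hk s 1]
    exact intervalIntegral.abs_integral_le_integral_abs hs1
  -- integral over subinterval of [0,1] bounded by weighted integral, for s ≥ 1/2
  have hhalf : ∀ k, k ≤ m → ∀ s : ℝ, 1/2 ≤ s → s ≤ 1 →
      (∫ u in s..1, |g k u|) ≤ 2 ^ α * W k := by
    intro k hk s hs h1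
    have step1 : (∫ u in s..1, |g k u|) ≤ ∫ u in s..1, 2 ^ α * (u ^ α * |g k u|) := by
      apply intervalIntegral.integral_mono_on h1
        ((hgc k hk).abs.intervalIntegrable s 1)
        ((continuous_const.mul (hwc.mul (hgc k hk).abs)).intervalIntegrable s 1)
      intro u hu
      simp only [Pi.mul_apply]
      have hu2 : (1/2 : ℝ) ≤ u := le_trans hs hu.1
      have h12 : ((1:ℝ)/2) ^ α ≤ u ^ α := Real.rpow_le_rpow (by norm_num) hu2 hα
      have hmul : (1:ℝ) ≤ 2 ^ α * u ^ α := by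
        have : (2:ℝ) ^ α * (1/2) ^ α = 1 := by
          rw [← Real.mul_rpow (by norm_num) (by norm_num)]
          norm_num
        nlinarith
      nlinarith [abs_nonneg (g k u), mul_le_mul_of_nonneg_right hmul (abs_nonneg (g k u))]
    have step2 : (∫ u in s..1, u ^ α * |g k u|) ≤ W k := by
      have hsplit := intervalIntegral.integral_add_adjacent_intervals (μ := volume)
        ((hwc.mul (hgc k hk).abs).intervalIntegrable 0 s)
        ((hwc.mul (hgc k hk).abs).intervalIntegrable s 1)
      have hnn : 0 ≤ ∫ u in (0:ℝ)..s, u ^ α * |g k u| := by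
        apply intervalIntegral.integral_nonneg (by linarith)
        intro u hu
        exact mul_nonneg (Real.rpow_nonneg hu.1 α) (abs_nonneg _)
      rw [hW]
      simp only
      simp only [Pi.mul_apply] at hsplit
      rw [← hsplit]
      linarith
    rw [intervalIntegral.integral_const_mul] at step1
    nlinarith
  -- boundary bound
  have hB : ∀ k, k < m → |g k 1| ≤ D * S := by
    intro k hk
    have hgk : Continuous (g k) := hgc k (le_of_lt hk)
    have hvcont : Continuous fun s : ℝ => ∫ u in s..1, |g (k+1) u| := by
      have := fun s : ℝ => ((hgc (k+1) hk).abs.integral_hasStrictDerivAt 1 s).hasDerivAt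
      have heq : (fun s : ℝ => ∫ u in s..1, |g (k+1) u|)
          = fun s : ℝ => -∫ u in (1:ℝ)..s, |g (k+1) u| := by
        funext x; rw [← intervalIntegral.integral_symm]
      rw [heq]
      exact continuous_iff_continuousAt.mpr fun s => ((this s).neg).continuousAt
    have h1 : ∀ s ∈ Icc (1/2 : ℝ) 1, |g k 1| ≤ |g k s| + 2 ^ α * W (k+1) := by
      intro s hs
      have hle := key1 k hk s (by linarith [hs.1]) hs.2
      have := hhalf (k+1) hk s hs.1 hs.2
      have habs : |g k 1| ≤ |g k s| + |g k 1 - g k s| := by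
        have := abs_sub_abs_le_abs_sub (g k 1) (g k s); linarith [abs_nonneg (g k 1 - g k s)]
      linarith
    have hint : (∫ s in (1/2 : ℝ)..1, |g k 1|) ≤
        ∫ s in (1/2 : ℝ)..1, (|g k s| + 2 ^ α * W (k+1)) := by
      apply intervalIntegral.integral_mono_on (by norm_num)
        (intervalIntegrable_const (μ := volume)) ((hgk.abs.add continuous_const).intervalIntegrable _ _)
      exact h1
    rw [intervalIntegral.integral_const] at hint
    have hsplit : (∫ s in (1/2 : ℝ)..1, (|g k s| + 2 ^ α * W (k+1)))
        = (∫ s in (1/2 : ℝ)..1, |g k s|) + (1 - 1/2) * (2 ^ α * W (k+1)) := by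
      rw [intervalIntegral.integral_add (hgk.abs.intervalIntegrable _ _)
        (intervalIntegrable_const), intervalIntegral.integral_const]
      simp [smul_eq_mul]
    have hIk : (∫ s in (1/2 : ℝ)..1, |g k s|) ≤ 2 ^ α * W k :=
      hhalf k (le_of_lt hk) (1/2) le_rfl (by norm_num)
    have hWk := hWS k (le_of_lt hk)
    have hWk1 := hWS (k+1) hk
    have hWnn1 := hWnn (k+1)
    have h2a1 : (2:ℝ) ^ (α + 1) = 2 * 2 ^ α := by
      rw [Real.rpow_add (by norm_num), Real.rpow_one]; ring
    rw [smul_eq_mul] at hint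
    rw [hD]
    nlinarith [hWnn k]
  -- Hardy step
  have hardy : ∀ j : ℕ, j + 2 ≤ m →
      (∫ s in (0:ℝ)..1, s ^ j * |g (j+1) s|) ≤
        |g (j+1) 1| + ∫ s in (0:ℝ)..1, s ^ (j+1) * |g (j+2) s| := by
    intro j hj
    have hc1 : Continuous (g (j+1)) := hgc (j+1) (by omega)
    have hc2 : Continuous (g (j+2)) := hgc (j+2) hj
    set v : ℝ → ℝ := fun s => ∫ u in s..1, |g (j+2) u| with hv
    have hvd : ∀ s : ℝ, HasDerivAt v (-|g (j+2) s|) s := by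
      intro s
      have h0 := (hc2.abs.integral_hasStrictDerivAt 1 s).hasDerivAt
      have heq : v = fun x : ℝ => -∫ u in (1:ℝ)..x, |g (j+2) u| := by
        funext x; rw [hv]; simp only; rw [← intervalIntegral.integral_symm]
      rw [heq]
      exact h0.neg
    have hvcont : Continuous v := continuous_iff_continuousAt.mpr fun s => (hvd s).continuousAt
    have hvnn : ∀ s ∈ Icc (0:ℝ) 1, 0 ≤ v s := by
      intro s hs
      exact intervalIntegral.integral_nonneg hs.2 fun u _ => abs_nonneg _
    have hv1 : v 1 = 0 := intervalIntegral.integral_same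
    -- integration by parts
    have hPd : ∀ s : ℝ, HasDerivAt (fun x => x ^ (j+1) * v x)
        ((j+1 : ℝ) * s ^ j * v s + s ^ (j+1) * (-|g (j+2) s|)) s := by
      intro s
      have := (hasDerivAt_pow (j+1) s).mul (hvd s)
      simpa [Pi.mul_def] using this
    have hibp : (∫ s in (0:ℝ)..1, ((j+1 : ℝ) * s ^ j * v s + s ^ (j+1) * (-|g (j+2) s|))) = 0 := by
      rw [intervalIntegral.integral_eq_sub_of_hasDerivAt (fun x _ => hPd x)]
      · simp [hv1, zero_pow (Nat.succ_ne_zero j)]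
      · exact ((continuous_const.mul (continuous_pow j)).mul hvcont).add
          ((continuous_pow (j+1)).mul hc2.abs.neg) |>.intervalIntegrable 0 1
    have hsplit : ((j:ℝ)+1) * (∫ s in (0:ℝ)..1, s ^ j * v s)
        = ∫ s in (0:ℝ)..1, s ^ (j+1) * |g (j+2) s| := by
      have hi1 : IntervalIntegrable (fun s : ℝ => (j+1 : ℝ) * (s ^ j * v s)) volume 0 1 :=
        (continuous_const.mul ((continuous_pow j).mul hvcont)).intervalIntegrable 0 1
      have hi2 : IntervalIntegrable (fun s : ℝ => s ^ (j+1) * |g (j+2) s|) volume 0 1 :=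
        ((continuous_pow (j+1)).mul hc2.abs).intervalIntegrable 0 1
      have := intervalIntegral.integral_add hi1 hi2.neg
      simp only [Pi.neg_apply] at this
      rw [intervalIntegral.integral_const_mul, intervalIntegral.integral_neg] at this
      have heq2 : (∫ s in (0:ℝ)..1, ((j+1 : ℝ) * (s ^ j * v s) + -(s ^ (j+1) * |g (j+2) s|)))
          = 0 := by
        rw [← hibp]
        congr 1
        funext s
        ring
      rw [heq2] at this
      linarith
    have hA0 : 0 ≤ ∫ s in (0:ℝ)..1, s ^ j * v s := by
      apply intervalIntegral.integral_nonneg zero_le_one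
      intro u hu
      exact mul_nonneg (pow_nonneg hu.1 j) (hvnn u hu)
    have hB2 : (∫ s in (0:ℝ)..1, s ^ j * v s) ≤ ∫ s in (0:ℝ)..1, s ^ (j+1) * |g (j+2) s| := by
      nlinarith [Nat.cast_nonneg (α := ℝ) j]
    -- pointwise bound then integrate
    have hmono : (∫ s in (0:ℝ)..1, s ^ j * |g (j+1) s|)
        ≤ ∫ s in (0:ℝ)..1, (s ^ j * |g (j+1) 1| + s ^ j * v s) := by
      apply intervalIntegral.integral_mono_on zero_le_one
        ((((continuous_pow j).mul hc1.abs)).intervalIntegrable 0 1)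
      · exact (((continuous_pow j).mul continuous_const).add
          ((continuous_pow j).mul hvcont)).intervalIntegrable 0 1
      intro s hs
      simp only [Pi.mul_apply]
      have hkey := key1 (j+1) (by omega) s hs.1 hs.2
      have habs : |g (j+1) s| ≤ |g (j+1) 1| + v s := by
        have h1 := abs_sub_abs_le_abs_sub (g (j+1) s) (g (j+1) 1)
        have h2 : |g (j+1) s - g (j+1) 1| = |g (j+1) 1 - g (j+1) s| := abs_sub_comm _ _
        rw [hv]; simp only
        linarith
      have hsj : (0:ℝ) ≤ s ^ j := pow_nonneg hs.1 j
      nlinarith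
    have hsum : (∫ s in (0:ℝ)..1, (s ^ j * |g (j+1) 1| + s ^ j * v s))
        = |g (j+1) 1| * (∫ s in (0:ℝ)..1, s ^ j) + ∫ s in (0:ℝ)..1, s ^ j * v s := by
      rw [intervalIntegral.integral_add]
      · congr 1
        rw [← intervalIntegral.integral_const_mul]
        congr 1; funext s; ring
      · exact ((continuous_pow j).mul continuous_const).intervalIntegrable 0 1
      · exact ((continuous_pow j).mul hvcont).intervalIntegrable 0 1
    have hpowint : (∫ s in (0:ℝ)..1, s ^ j) = 1 / ((j:ℝ)+1) := by
      rw [integral_pow]; push_cast; norm_num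
    have hfrac : |g (j+1) 1| * (1 / ((j:ℝ)+1)) ≤ |g (j+1) 1| := by
      have hj1 : (1:ℝ) ≤ (j:ℝ) + 1 := by have : (0:ℝ) ≤ (j:ℝ) := Nat.cast_nonneg j; linarith
      have : 1 / ((j:ℝ)+1) ≤ 1 := by
        rw [div_le_one (by positivity)]; exact hj1
      nlinarith [abs_nonneg (g (j+1) 1)]
    rw [hsum, hpowint] at hmono
    linarith
  -- the chain
  have chain : ∀ c : ℕ, ∀ j : ℕ, j + c = m - 1 →
      (∫ s in (0:ℝ)..1, s ^ j * |g (j+1) s|) ≤ ((c:ℝ)+1) * (D+1) * S := by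
    intro c
    induction c with
    | zero =>
      intro j hj
      have hjm : j = m - 1 := by omega
      subst hjm
      have hend : (∫ s in (0:ℝ)..1, s ^ (m-1) * |g (m-1+1) s|) ≤ W m := by
        have hmm : m - 1 + 1 = m := by omega
        rw [hmm]
        apply intervalIntegral.integral_mono_on zero_le_one
          (((continuous_pow (m-1)).mul (hgc m le_rfl).abs).intervalIntegrable 0 1)
          ((hwc.mul (hgc m le_rfl).abs).intervalIntegrable 0 1)
        intro s hs
        simp only [Pi.mul_apply]
        rcases eq_or_lt_of_le hs.1 with hs0 | hs0
        · rw [← hs0, zero_pow (by omega : m - 1 ≠ 0), zero_mul]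
          exact mul_nonneg (Real.rpow_nonneg le_rfl α) (abs_nonneg _)
        · have hcast : ((m-1 : ℕ) : ℝ) = (m:ℝ) - 1 := by
            push_cast [Nat.cast_sub (by omega : 1 ≤ m)]; ring
          have hle : s ^ ((m-1:ℕ):ℝ) ≤ s ^ α := by
            apply Real.rpow_le_rpow_of_exponent_ge hs0 hs.2
            rw [hcast]; linarith
          rw [← Real.rpow_natCast s (m-1)]
          exact mul_le_mul_of_nonneg_right hle (abs_nonneg _)
      have hws := hWS m le_rfl
      have hsc : S ≤ (D + 1) * S := by nlinarith
      simp only [Nat.cast_zero, zero_add, one_mul]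
      linarith
    | succ c ih =>
      intro j hj
      have hj2 : j + 2 ≤ m := by omega
      have hstep := hardy j hj2
      have hih := ih (j+1) (by omega)
      have hBj := hB (j+1) (by omega)
      have hc0 : (0:ℝ) ≤ (c:ℝ) := Nat.cast_nonneg c
      have hsc : D * S + ((c:ℝ)+1) * (D+1) * S ≤ ((c:ℝ)+1+1) * (D+1) * S := by nlinarith
      simp only [Nat.cast_add, Nat.cast_one]
      linarith
  -- conclusion
  intro t ht
  have h0m : 0 < m := by omega
  have hf0 : f = g 0 := by rw [hg]; simp
  have hkey := key1 0 h0m t ht.1 ht.2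
  have habs : |f t| ≤ |g 0 1| + ∫ u in t..1, |g 1 u| := by
    rw [hf0]
    have h1 := abs_sub_abs_le_abs_sub (g 0 t) (g 0 1)
    have h2 : |g 0 t - g 0 1| = |g 0 1 - g 0 t| := abs_sub_comm _ _
    linarith
  have hsub : (∫ u in t..1, |g 1 u|) ≤ ∫ u in (0:ℝ)..1, |g 1 u| := by
    have hsplit := intervalIntegral.integral_add_adjacent_intervals (μ := volume)
      ((hgc 1 (by omega)).abs.intervalIntegrable 0 t)
      ((hgc 1 (by omega)).abs.intervalIntegrable t 1)
    have hnn : 0 ≤ ∫ u in (0:ℝ)..t, |g 1 u| :=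
      intervalIntegral.integral_nonneg ht.1 fun u _ => abs_nonneg _
    linarith
  have hT0 : (∫ u in (0:ℝ)..1, |g 1 u|) = ∫ s in (0:ℝ)..1, s ^ (0:ℕ) * |g (0+1) s| := by
    congr 1; funext s; simp
  have hchain := chain (m-1) 0 (by omega)
  have hB0 := hB 0 h0m
  have hcast : ((m-1 : ℕ) : ℝ) + 1 = (m:ℝ) := by
    push_cast [Nat.cast_sub (by omega : 1 ≤ m)]; ring
  rw [hcast] at hchain
  rw [hT0] at hsub
  have hfinal : |f t| ≤ D * S + (m:ℝ) * (D+1) * S := by linarith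
  have hmn : (0:ℝ) ≤ (m:ℝ) := Nat.cast_nonneg m
  have hsc : D * S + (m:ℝ) * (D+1) * S ≤ (D + (m:ℝ) * (D + 1) + 1) * S := by nlinarith
  linarith
end

section
/- Let E₁, E₀, E₋₁ : [0,1] → [0,∞) be functions, θ ∈ (0,1), α = (1−θ)/θ, and C > 0, satisfying: (i) E₀(1) + ∫₀¹ t^{1+α} E₁(t) dt ≤ C ∫₀¹ t^α E₀(t) dt; (ii) E₁(1) ≤ C ∫₀¹ t^{1+α} E₁(t) dt; and (iii) E₀(t) ≤ C(E₁(t)^{1−θ} E₋₁(t)^θ + E₋₁(t)) for all t. Then E₀(1) + E₁(1) ≤ C' ∫₀¹ E₋₁(t) dt, where C' depends only on C and θ. -/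
open MeasureTheory

/-- Abstract ODE/interpolation argument: if
(i) `E₀(1) + ∫₀¹ t^{1+α} E₁ ≤ C ∫₀¹ t^α E₀`, (ii) `E₁(1) ≤ C ∫₀¹ t^{1+α} E₁`, and
(iii) `E₀ ≤ C (E₁^{1−θ} E₋₁^θ + E₋₁)` pointwise on `[0,1]`, with `α = (1−θ)/θ`,
then `E₀(1) + E₁(1) ≤ C' ∫₀¹ E₋₁`, with `C'` depending only on `C` and `θ`. -/
theorem stmt_9 (C θ : ℝ) (hC : 0 < C) (hθ0 : 0 < θ) (hθ1 : θ < 1) :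
    ∃ C' : ℝ, 0 < C' ∧
      ∀ E₁ E₀ Em : ℝ → ℝ,
        (∀ t ∈ Set.Icc (0 : ℝ) 1, 0 ≤ E₁ t ∧ 0 ≤ E₀ t ∧ 0 ≤ Em t) →
        IntervalIntegrable (fun t => t ^ ((1 - θ) / θ) * E₀ t) volume 0 1 →
        IntervalIntegrable (fun t => t ^ (1 + (1 - θ) / θ) * E₁ t) volume 0 1 →
        IntervalIntegrable Em volume 0 1 →
        (E₀ 1 + ∫ t in (0 : ℝ)..1, t ^ (1 + (1 - θ) / θ) * E₁ t ≤
          C * ∫ t in (0 : ℝ)..1, t ^ ((1 - θ) / θ) * E₀ t) →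
        (E₁ 1 ≤ C * ∫ t in (0 : ℝ)..1, t ^ (1 + (1 - θ) / θ) * E₁ t) →
        (∀ t ∈ Set.Icc (0 : ℝ) 1, E₀ t ≤ C * (E₁ t ^ (1 - θ) * Em t ^ θ + Em t)) →
        E₀ 1 + E₁ 1 ≤ C' * ∫ t in (0 : ℝ)..1, Em t := by
  set α : ℝ := (1 - θ) / θ with hαdef
  have hθ1' : 0 < 1 - θ := by linarith
  have hα : 0 ≤ α := div_nonneg hθ1'.le hθ0.le
  set ε : ℝ := 1 / (2 * C ^ 2 * (1 - θ)) with hεdef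
  have hε : 0 < ε := by positivity
  set δ : ℝ := -(1 - θ) / θ with hδdef
  set K : ℝ := θ * ε ^ δ + 1 with hKdef
  have hK : 0 < K := by
    have := Real.rpow_pos_of_pos hε δ
    positivity
  refine ⟨(C ^ 2 + 2 * C ^ 3) * K, by positivity, ?_⟩
  intro E₁ E₀ Em h0 hI0 hI1 hIm hi hii hiii
  set A : ℝ := ∫ t in (0 : ℝ)..1, t ^ α * E₀ t with hA
  set B : ℝ := ∫ t in (0 : ℝ)..1, t ^ (1 + α) * E₁ t with hB
  set M : ℝ := ∫ t in (0 : ℝ)..1, Em t with hM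
  have hB0 : 0 ≤ B := by
    apply intervalIntegral.integral_nonneg (by norm_num)
    intro t ht
    exact mul_nonneg (Real.rpow_nonneg ht.1 _) (h0 t ht).1
  have hM0 : 0 ≤ M := by
    apply intervalIntegral.integral_nonneg (by norm_num)
    intro t ht; exact (h0 t ht).2.2
  -- key pointwise inequality
  have key : ∀ t ∈ Set.Icc (0 : ℝ) 1,
      t ^ α * E₀ t ≤ C * ((1 - θ) * ε * (t ^ (1 + α) * E₁ t) + K * Em t) := by
    intro t ht
    obtain ⟨hE₁, hE₀, hEm⟩ := h0 t ht
    have ht0 : (0 : ℝ) ≤ t := ht.1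
    have ht1 : t ≤ 1 := ht.2
    have hta : t ^ α ≤ 1 := Real.rpow_le_one ht0 ht1 hα
    have htann : 0 ≤ t ^ α := Real.rpow_nonneg ht0 _
    have step1 : t ^ α * E₀ t ≤ C * (t ^ α * (E₁ t ^ (1 - θ) * Em t ^ θ) + t ^ α * Em t) := by
      calc t ^ α * E₀ t ≤ t ^ α * (C * (E₁ t ^ (1 - θ) * Em t ^ θ + Em t)) :=
            mul_le_mul_of_nonneg_left (hiii t ht) htann
        _ = C * (t ^ α * (E₁ t ^ (1 - θ) * Em t ^ θ) + t ^ α * Em t) := by ring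
    have hEm' : t ^ α * Em t ≤ Em t := by
      nlinarith [mul_le_of_le_one_left hEm hta]
    -- rewrite the middle term as a product suitable for Young
    have hprod : t ^ α * (E₁ t ^ (1 - θ) * Em t ^ θ)
        = (ε * (t ^ (1 + α) * E₁ t)) ^ (1 - θ) * (ε ^ δ * Em t) ^ θ := by
      have e1 : (ε * (t ^ (1 + α) * E₁ t)) ^ (1 - θ)
          = ε ^ (1 - θ) * (t ^ α * E₁ t ^ (1 - θ)) := by
        rw [Real.mul_rpow hε.le (mul_nonneg (Real.rpow_nonneg ht0 _) hE₁),
          Real.mul_rpow (Real.rpow_nonneg ht0 _) hE₁, ← Real.rpow_mul ht0,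
          show (1 + α) * (1 - θ) = α by rw [hαdef]; field_simp; ring]
      have e2 : (ε ^ δ * Em t) ^ θ = ε ^ (δ * θ) * Em t ^ θ := by
        rw [Real.mul_rpow (Real.rpow_nonneg hε.le _) hEm, ← Real.rpow_mul hε.le]
      rw [e1, e2]
      have e3 : ε ^ (1 - θ) * ε ^ (δ * θ) = 1 := by
        rw [← Real.rpow_add hε]
        rw [show (1 - θ) + δ * θ = 0 by rw [hδdef, div_mul_cancel₀ _ hθ0.ne']; ring]
        exact Real.rpow_zero ε
      calc t ^ α * (E₁ t ^ (1 - θ) * Em t ^ θ)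
          = (ε ^ (1 - θ) * ε ^ (δ * θ)) * (t ^ α * (E₁ t ^ (1 - θ) * Em t ^ θ)) := by
            rw [e3, one_mul]
        _ = ε ^ (1 - θ) * (t ^ α * E₁ t ^ (1 - θ)) * (ε ^ (δ * θ) * Em t ^ θ) := by ring
    have hyoung : (ε * (t ^ (1 + α) * E₁ t)) ^ (1 - θ) * (ε ^ δ * Em t) ^ θ
        ≤ (1 - θ) * (ε * (t ^ (1 + α) * E₁ t)) + θ * (ε ^ δ * Em t) :=
      Real.geom_mean_le_arith_mean2_weighted hθ1'.le hθ0.le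
        (mul_nonneg hε.le (mul_nonneg (Real.rpow_nonneg ht0 _) hE₁))
        (mul_nonneg (Real.rpow_nonneg hε.le _) hEm) (by ring)
    calc t ^ α * E₀ t
        ≤ C * (t ^ α * (E₁ t ^ (1 - θ) * Em t ^ θ) + t ^ α * Em t) := step1
      _ ≤ C * (((1 - θ) * (ε * (t ^ (1 + α) * E₁ t)) + θ * (ε ^ δ * Em t)) + Em t) := by
          apply mul_le_mul_of_nonneg_left _ hC.le
          apply add_le_add _ hEm'
          rw [hprod]; exact hyoung
      _ = C * ((1 - θ) * ε * (t ^ (1 + α) * E₁ t) + K * Em t) := by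
          rw [hKdef]; ring
  -- integrate the pointwise inequality
  have hInt : A ≤ C * ((1 - θ) * ε * B + K * M) := by
    have hrhs : IntervalIntegrable
        (fun t => C * ((1 - θ) * ε * (t ^ (1 + α) * E₁ t) + K * Em t)) volume 0 1 := by
      exact (((hI1.const_mul ((1 - θ) * ε)).add (hIm.const_mul K)).const_mul C)
    have := intervalIntegral.integral_mono_on (by norm_num : (0:ℝ) ≤ 1) hI0 hrhs key
    calc A ≤ ∫ t in (0:ℝ)..1, C * ((1 - θ) * ε * (t ^ (1 + α) * E₁ t) + K * Em t) := this
      _ = C * ((1 - θ) * ε * B + K * M) := by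
          rw [intervalIntegral.integral_const_mul]
          rw [intervalIntegral.integral_add (hI1.const_mul _) (hIm.const_mul _)]
          rw [intervalIntegral.integral_const_mul, intervalIntegral.integral_const_mul]
  -- finish
  have hE00 : 0 ≤ E₀ 1 := (h0 1 (by norm_num)).2.1
  clear_value K
  have hCA : C * A ≤ (1 / 2) * B + C ^ 2 * K * M := by
    have h1 : C * A ≤ C * (C * ((1 - θ) * ε * B + K * M)) :=
      mul_le_mul_of_nonneg_left hInt hC.le
    have h2 : C * (C * ((1 - θ) * ε * B + K * M)) = (1 / 2) * B + C ^ 2 * K * M := by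
      have hne : (2 * C ^ 2 * (1 - θ)) ≠ 0 := by positivity
      rw [hεdef]; field_simp
    linarith
  have hBle : B ≤ 2 * C ^ 2 * K * M := by linarith
  have hE1le : E₁ 1 ≤ 2 * C ^ 3 * K * M := by
    calc E₁ 1 ≤ C * B := hii
      _ ≤ C * (2 * C ^ 2 * K * M) := mul_le_mul_of_nonneg_left hBle hC.le
      _ = 2 * C ^ 3 * K * M := by ring
  have hE0le : E₀ 1 ≤ C ^ 2 * K * M := by linarith
  linarith [hE0le, hE1le]
end

section
/- Let κ ∈ ℕ and define g₁(μ,T) = (T^{−1} + μ)^{−1} for μ, T > 0, and recursively g_{κ+1}(μ,T) = (2^κ g_κ(μ,2T) − g_κ(μ,T))/(2^κ − 1). Then for every κ ≥ 1 there is a constant c_κ > 0 such that for all μ, T > 0, |g_κ(μ,T) − 1/μ| ≥ c_κ T^{−κ} / (μ (T^{−1} + μ)^κ). -/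
/-- The `κ`-th Richardson extrapolation (in `T`) of the resolvent function
`g₁(μ,T) = (T⁻¹ + μ)⁻¹`, via `g_{κ+1}(μ,T) = (2^κ g_κ(μ,2T) − g_κ(μ,T))/(2^κ − 1)`.
(The value at `κ = 0` is set to `g₀(μ) = μ⁻¹` and is not used by the recursion.) -/
noncomputable def gRich : ℕ → ℝ → ℝ → ℝ
  | 0, mu, _ => mu⁻¹
  | 1, mu, T => (T⁻¹ + mu)⁻¹
  | (n + 2), mu, T =>
      (2 ^ (n + 1) * gRich (n + 1) mu (2 * T) - gRich (n + 1) mu T) / (2 ^ (n + 1) - 1)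

lemma gRich_succ (n : ℕ) (hn : 1 ≤ n) (mu T : ℝ) :
    gRich (n+1) mu T = (2^n * gRich n mu (2*T) - gRich n mu T)/(2^n - 1) := by
  cases n with
  | zero => omega
  | succ m => rfl

lemma key : ∀ κ : ℕ, 1 ≤ κ → ∃ a : ℝ, 0 < a ∧ ∀ mu T : ℝ, 0 < mu → 0 < T →
    mu⁻¹ - gRich κ mu T
      = a * (T⁻¹)^κ / (mu * ∏ j ∈ Finset.range κ, ((2^j * T)⁻¹ + mu)) := by
  intro κ hκ
  induction κ, hκ using Nat.le_induction with
  | base =>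
    refine ⟨1, one_pos, fun mu T hmu hT => ?_⟩
    simp only [gRich, Finset.prod_range_one, pow_zero, one_mul, pow_one]
    have h1 : T⁻¹ + mu ≠ 0 := by positivity
    field_simp
    ring
  | succ n hn ih =>
    obtain ⟨a, ha, hA⟩ := ih
    refine ⟨a / 2^n, by positivity, fun mu T hmu hT => ?_⟩
    have hT2 : (0:ℝ) < 2*T := by linarith
    have g1 : gRich n mu T = mu⁻¹ - a * (T⁻¹)^n / (mu * ∏ j ∈ Finset.range n, ((2^j * T)⁻¹ + mu)) := by
      have := hA mu T hmu hT; linarith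
    have g2 : gRich n mu (2*T) = mu⁻¹ - a * ((2*T)⁻¹)^n / (mu * ∏ j ∈ Finset.range n, ((2^j * (2*T))⁻¹ + mu)) := by
      have := hA mu (2*T) hmu hT2; linarith
    rw [gRich_succ n hn, g1, g2]
    have hp : (0:ℝ) < ∏ j ∈ Finset.range n, ((2^j * T)⁻¹ + mu) :=
      Finset.prod_pos (fun j _ => by positivity)
    set p := ∏ j ∈ Finset.range n, ((2^j * T)⁻¹ + mu) with hpdef
    have hshift : ∏ j ∈ Finset.range n, ((2^j * (2*T))⁻¹ + mu)
        = ∏ j ∈ Finset.range n, ((2^(j+1) * T)⁻¹ + mu) := by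
      apply Finset.prod_congr rfl
      intro j _
      congr 2
      ring
    have hq : (∏ j ∈ Finset.range n, ((2^(j+1) * T)⁻¹ + mu)) * ((2^0 * T)⁻¹ + mu)
        = p * ((2^n * T)⁻¹ + mu) :=
      (Finset.prod_range_succ' (fun k => ((2:ℝ)^k * T)⁻¹ + mu) n).symm.trans
        (Finset.prod_range_succ (fun k => ((2:ℝ)^k * T)⁻¹ + mu) n)
    have hq0 : (0:ℝ) < ∏ j ∈ Finset.range n, ((2^(j+1) * T)⁻¹ + mu) :=
      Finset.prod_pos (fun j _ => by positivity)
    have hD0 : (0:ℝ) < T⁻¹ + mu := by positivity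
    have hDn : (0:ℝ) < (2^n * T)⁻¹ + mu := by positivity
    have hq' : ∏ j ∈ Finset.range n, ((2^(j+1) * T)⁻¹ + mu)
        = p * ((2^n * T)⁻¹ + mu) / (T⁻¹ + mu) := by
      rw [eq_div_iff (ne_of_gt hD0)]
      simpa using hq
    rw [hshift, hq', Finset.prod_range_succ, ← hpdef]
    have h2n : (1:ℝ) < 2^n := one_lt_pow₀ (by norm_num) (by omega)
    have h2n' : (2:ℝ)^n - 1 ≠ 0 := by linarith
    have hTn : (2:ℝ)^n * T ≠ 0 := by positivity
    have hp' : p ≠ 0 := ne_of_gt hp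
    have hmu' : mu ≠ 0 := ne_of_gt hmu
    have hT' : T ≠ 0 := ne_of_gt hT
    have hD0' : T⁻¹ + mu ≠ 0 := ne_of_gt hD0
    have hDn' : (2^n * T)⁻¹ + mu ≠ 0 := ne_of_gt hDn
    field_simp
    have e1 : (1/2:ℝ)^n * 2^n = 1 := by rw [← mul_pow]; norm_num
    have e2 : T * T⁻¹ = 1 := mul_inv_cancel₀ hT'
    linear_combination (a*T⁻¹^n*2^n*(mu*T+1)) * e1 - (a*T⁻¹^n*(2^n-1)) * e2

/-- Lower bound on the Richardson extrapolation error: for every `κ ≥ 1` there is `c_κ > 0`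
with `|g_κ(μ,T) − 1/μ| ≥ c_κ T^{−κ}/(μ (T^{−1}+μ)^κ)` for all `μ, T > 0`. -/
theorem stmt_10 : ∀ κ : ℕ, 1 ≤ κ → ∃ c : ℝ, 0 < c ∧
    ∀ mu T : ℝ, 0 < mu → 0 < T →
      c * T ^ (-(κ : ℝ)) / (mu * (T⁻¹ + mu) ^ κ) ≤ |gRich κ mu T - mu⁻¹| := by
  intro κ hκ
  obtain ⟨a, ha, hA⟩ := key κ hκ
  refine ⟨a, ha, fun mu T hmu hT => ?_⟩
  have herr := hA mu T hmu hT
  have hp : (0:ℝ) < ∏ j ∈ Finset.range κ, ((2^j * T)⁻¹ + mu) :=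
    Finset.prod_pos (fun j _ => by positivity)
  have hbound : ∏ j ∈ Finset.range κ, ((2^j * T)⁻¹ + mu) ≤ (T⁻¹ + mu)^κ := by
    calc ∏ j ∈ Finset.range κ, ((2^j * T)⁻¹ + mu)
        ≤ ∏ _j ∈ Finset.range κ, (T⁻¹ + mu) := ?_
      _ = (T⁻¹ + mu)^κ := by rw [Finset.prod_const, Finset.card_range]
    apply Finset.prod_le_prod (fun j _ => by positivity)
    intro j _
    have hj : T ≤ 2^j * T := le_mul_of_one_le_left hT.le (one_le_pow₀ (by norm_num))
    have : (2^j * T)⁻¹ ≤ T⁻¹ := by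
      apply inv_anti₀ hT hj
    linarith
  have hrpow : T ^ (-(κ:ℝ)) = (T⁻¹)^κ := by
    rw [Real.rpow_neg hT.le, Real.rpow_natCast, inv_pow]
  rw [abs_sub_comm, abs_of_nonneg (by rw [herr]; positivity), herr, hrpow]
  gcongr
end

section
/- Let C₀ ≥ 1, p ≥ 1, and θ ∈ (0,1) with C₀θ^p < 1. Suppose (ω_n)_{n≥0} are integrable functions on ℝ^d and (ψ_{r_n}) are kernels with r_n = θ^n such that ω_{n+1} = ω_n − ψ_{r_{n+1}} * ω_n, ∫|∇^p ω_n| ≤ C₀^n M, and ∫|ω_{n+1}| ≤ C₀ r_{n+1}^p ∫|∇^p ω_n|. Then ∫|ω_{n+1}| ≤ M (C₀ θ^p)^{n+1} for all n, and ω₀ = ∑_{n=0}^∞ ω_n * ψ_{r_n} with the series converging absolutely in L¹(ℝ^d). -/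
set_option maxHeartbeats 1000000


open MeasureTheory

/-- Recursive kernel decomposition: given `ω_{n+1} = ω_n − ψ_{r_{n+1}} * ω_n` with
`r_n = θ^n`, `∫|∇^p ω_n| ≤ C₀^n M` and `∫|ω_{n+1}| ≤ C₀ r_{n+1}^p ∫|∇^p ω_n|`, one gets
`∫|ω_{n+1}| ≤ M (C₀θ^p)^{n+1}`, and `ω₀ = ∑_n ψ_{r_{n+1}} * ω_n` with the series converging
absolutely in `L¹(ℝ^d)`. -/
theorem stmt_18 (d : ℕ) (p : ℕ) (C₀ θ M : ℝ) (hC₀ : 1 ≤ C₀) (hp : 1 ≤ p)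
    (hθ0 : 0 < θ) (hθ1 : θ < 1) (hcontr : C₀ * θ ^ p < 1) (hM : 0 ≤ M)
    (ω ψ : ℕ → EuclideanSpace ℝ (Fin d) → ℝ)
    (hωint : ∀ n, Integrable (ω n))
    (hψint : ∀ n, Integrable (ψ n))
    (hψbound : ∃ K : ℝ, ∀ n, (∫ x, |ψ n x|) ≤ K)
    (hrec : ∀ n x, ω (n + 1) x = ω n x - ∫ y, ψ (n + 1) (x - y) * ω n y)
    (hDbound : ∀ n, (∫ x, ‖iteratedFDeriv ℝ p (ω n) x‖) ≤ C₀ ^ n * M)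
    (hrecBound : ∀ n, (∫ x, |ω (n + 1) x|) ≤
      C₀ * (θ ^ (n + 1)) ^ p * ∫ x, ‖iteratedFDeriv ℝ p (ω n) x‖) :
    (∀ n, (∫ x, |ω (n + 1) x|) ≤ M * (C₀ * θ ^ p) ^ (n + 1)) ∧
    Summable (fun n => ∫ x, |∫ y, ψ (n + 1) (x - y) * ω n y|) ∧
    Filter.Tendsto (fun N => ∫ x, |ω 0 x -
        ∑ n ∈ Finset.range N, ∫ y, ψ (n + 1) (x - y) * ω n y|)
      Filter.atTop (nhds 0) := by
  set q : ℝ := C₀ * θ ^ p with hq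
  have hq0 : 0 ≤ q := mul_nonneg (by linarith) (pow_nonneg hθ0.le p)
  have hq1 : q < 1 := hcontr
  set a : ℕ → ℝ := fun n => ∫ x, |ω n x| with ha
  have hanneg : ∀ n, 0 ≤ a n := fun n => integral_nonneg fun x => abs_nonneg _
  have key : ∀ n, a (n + 1) ≤ M * q ^ (n + 1) := by
    intro n
    have h2 := hDbound n
    have h3 : C₀ * (θ ^ (n+1)) ^ p * ∫ x, ‖iteratedFDeriv ℝ p (ω n) x‖
        ≤ C₀ * (θ ^ (n+1)) ^ p * (C₀ ^ n * M) := by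
      apply mul_le_mul_of_nonneg_left h2
      positivity
    have h4 : C₀ * (θ ^ (n+1)) ^ p * (C₀ ^ n * M) = M * q ^ (n+1) := by
      have hpow : (θ ^ (n+1)) ^ p = (θ ^ p) ^ (n+1) := by
        rw [← pow_mul, ← pow_mul, Nat.mul_comm]
      rw [hq, mul_pow, hpow]; ring
    calc a (n+1) ≤ _ := hrecBound n
      _ ≤ _ := h3
      _ = _ := h4
  have hconv : ∀ n x, (∫ y, ψ (n + 1) (x - y) * ω n y) = ω n x - ω (n + 1) x := by
    intro n x; have := hrec n x; linarith
  have habs : ∀ n, (∫ x, |∫ y, ψ (n + 1) (x - y) * ω n y|) = ∫ x, |ω n x - ω (n+1) x| := by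
    intro n; simp only [hconv]
  have htail : Summable (fun n => a (n + 1)) :=
    Summable.of_nonneg_of_le (fun n => hanneg _) key
      ((summable_nat_add_iff 1).2 ((summable_geometric_of_lt_one hq0 hq1).mul_left M))
  have hsa : Summable a := (summable_nat_add_iff 1).1 htail
  have hsum2 : Summable (fun n => ∫ x, |∫ y, ψ (n + 1) (x - y) * ω n y|) := by
    apply Summable.of_nonneg_of_le (fun n => integral_nonneg fun x => abs_nonneg _)
      (fun n => ?_) (hsa.add htail)
    rw [habs n]
    calc (∫ x, |ω n x - ω (n+1) x|) ≤ ∫ x, (|ω n x| + |ω (n+1) x|) :=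
        integral_mono ((hωint n).sub (hωint (n+1))).abs ((hωint n).abs.add (hωint (n+1)).abs)
          (fun x => abs_sub _ _)
      _ = a n + a (n+1) := integral_add (hωint n).abs (hωint (n+1)).abs
  have htel : ∀ (N : ℕ) (x : EuclideanSpace ℝ (Fin d)),
      ω 0 x - ∑ n ∈ Finset.range N, (∫ y, ψ (n+1) (x-y) * ω n y) = ω N x := by
    intro N x
    simp only [hconv]
    rw [Finset.sum_range_sub' (fun n => ω n x)]
    ring
  have hfin : Filter.Tendsto a Filter.atTop (nhds 0) := by
    have hg : Filter.Tendsto (fun N : ℕ => M * q ^ N) Filter.atTop (nhds 0) := by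
      have := (tendsto_pow_atTop_nhds_zero_of_lt_one hq0 hq1).const_mul M
      simpa using this
    refine squeeze_zero' (Filter.Eventually.of_forall hanneg) ?_ hg
    filter_upwards [Filter.eventually_ge_atTop 1] with N hN
    obtain ⟨m, rfl⟩ := Nat.exists_eq_add_of_le hN
    rw [add_comm]
    exact key m
  refine ⟨key, hsum2, ?_⟩
  have heq : (fun N => ∫ x, |ω 0 x -
      ∑ n ∈ Finset.range N, ∫ y, ψ (n + 1) (x - y) * ω n y|) = a := by
    funext N; simp only [htel]; rfl
  rw [heq]
  exact hfin
end

section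
/- Let 1 < s ≤ 2 and s* = s/(s−1) ≥ 2, and let F be a random variable with E[F] = 0. Then ‖F‖_s := inf{M > 0 : log E[exp(|F/M|^s)] ≤ 1} is comparable (with constants depending only on s) to inf{M > 0 : for all ν ∈ ℝ, log E[exp(ν F/M)] ≤ max{ν²/2, |ν|^{s*}/s*}}. -/
open MeasureTheory Real Set

section OrliczAux

variable {s q : ℝ} (hs1 : 1 < s) (hs2 : s ≤ 2) (hq : q = s / (s - 1))

include hs1 hs2 hq in
lemma two_le_q : 2 ≤ q := by
  rw [hq, le_div_iff₀ (by linarith)]; linarith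

include hs1 hq in
lemma conj_sq : s.HolderConjugate q := by
  subst hq; exact (Real.holderConjugate_iff_eq_conjExponent hs1).2 rfl

/-- `exp y ≤ 1 + y + y² exp |y|` -/
lemma r_bound (y : ℝ) : Real.exp y ≤ 1 + y + y ^ 2 * Real.exp |y| := by
  rcases le_or_gt (|y|) 1 with h | h
  · have := Real.exp_bound h (by norm_num : 0 < 2)
    have hsum : ∑ m ∈ Finset.range 2, y ^ m / (m.factorial : ℝ) = 1 + y := by
      simp [Finset.sum_range_succ]
    rw [hsum] at this
    have h1 : Real.exp y - (1 + y) ≤ |y| ^ 2 * ((2:ℕ).succ / ((2:ℕ).factorial * 2)) :=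
      (le_abs_self _).trans this
    have h2 : |y| ^ 2 * ((2:ℕ).succ / ((2:ℕ).factorial * 2)) = y ^ 2 * (3/4) := by
      rw [sq_abs]; norm_num [Nat.factorial]
    nlinarith [sq_nonneg y, Real.one_le_exp (abs_nonneg y)]
  · rcases le_or_gt 0 y with hy | hy
    · have h1 : (1:ℝ) ≤ y ^ 2 := by nlinarith [abs_of_nonneg hy ▸ h]
      have h2 : Real.exp y ≤ y ^ 2 * Real.exp |y| := by
        rw [abs_of_nonneg hy]
        nlinarith [Real.exp_pos y]
      nlinarith
    · have h0 : Real.exp y ≤ 1 := Real.exp_le_one_iff.mpr hy.le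
      have h1 : 0 ≤ y + y ^ 2 := by nlinarith [abs_of_neg hy ▸ h]
      nlinarith [sq_nonneg y, Real.one_le_exp (abs_nonneg y), sq_nonneg y]

include hs1 hq in
/-- `b u ≤ u^s + b^q` for `0 < b`, `0 ≤ u`. -/
lemma lin_le_rpow {b u : ℝ} (hb : 0 < b) (hu : 0 ≤ u) : b * u ≤ u ^ s + b ^ q := by
  have hs0 : (0:ℝ) < s - 1 := by linarith
  rcases le_or_gt u (b ^ (s-1)⁻¹) with h | h
  · have : b * u ≤ b * b ^ (s-1)⁻¹ := by
      exact mul_le_mul_of_nonneg_left h hb.le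
    have hbq : b * b ^ (s-1)⁻¹ = b ^ q := by
      have h1 : (1:ℝ) + (s-1)⁻¹ = s/(s-1) := by field_simp; ring
      calc b * b ^ (s-1)⁻¹ = b ^ (1:ℝ) * b ^ (s-1)⁻¹ := by rw [Real.rpow_one]
        _ = b ^ ((1:ℝ) + (s-1)⁻¹) := (Real.rpow_add hb _ _).symm
        _ = b ^ q := by rw [hq, h1]
    calc b * u ≤ b ^ q := hbq ▸ this
      _ ≤ u ^ s + b ^ q := le_add_of_nonneg_left (by positivity)
  · have hu0 : 0 < u := lt_of_le_of_lt (by positivity) h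
    have hb' : b ≤ u ^ (s - 1) := by
      have := Real.rpow_le_rpow (by positivity) h.le (le_of_lt hs0)
      rwa [← Real.rpow_mul hb.le, inv_mul_cancel₀ hs0.ne', Real.rpow_one] at this
    have : b * u ≤ u ^ (s-1) * u := mul_le_mul_of_nonneg_right hb' hu
    have h2 : u ^ (s-1) * u = u ^ s := by
      rw [← Real.rpow_add_one hu0.ne' (s-1)]; norm_num
    calc b * u ≤ u ^ s := h2 ▸ this
      _ ≤ u ^ s + b ^ q := le_add_of_nonneg_right (by positivity)

lemma exp_le_one_add_mul_exp {a : ℝ} (ha : 0 ≤ a) : Real.exp a ≤ 1 + a * Real.exp a := by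
  have h := Real.add_one_le_exp (-a)
  have h3 : Real.exp (-a) * Real.exp a = 1 := by rw [← Real.exp_add]; simp
  nlinarith [Real.exp_pos a]

lemma self_le_exp (x : ℝ) : x ≤ Real.exp x := by linarith [Real.add_one_le_exp x]



variable (hs1 : 1 < s) (hs2 : s ≤ 2) (hq : q = s / (s - 1))
include hs1 hs2 hq

lemma easy_dir {Ω : Type} [MeasurableSpace Ω] (μ : Measure Ω) [IsProbabilityMeasure μ]
    (G : Ω → ℝ) (hGint : Integrable G μ) (hG0 : (∫ ω, G ω ∂μ) = 0)
    (hint : ∀ ν : ℝ, Integrable (fun ω => Real.exp (ν * G ω)) μ)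
    (hAint : Integrable (fun ω => Real.exp (|G ω| ^ s)) μ)
    (hA : (∫ ω, Real.exp (|G ω| ^ s) ∂μ) ≤ Real.exp 1) (ν : ℝ) :
    (∫ ω, Real.exp (ν * G ω / (2 * Real.exp (3 ^ q + 1))) ∂μ) ≤
      Real.exp (max (ν ^ 2 / 2) (|ν| ^ q / q)) := by
  have hq2 : 2 ≤ q := two_le_q hs1 hs2 hq
  have hq0 : 0 < q := by linarith
  set C : ℝ := 2 * Real.exp (3 ^ q + 1) with hCdef
  have hE1 : 1 ≤ Real.exp (3 ^ q + 1) := Real.one_le_exp (by positivity)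
  have hC0 : 0 < C := by positivity
  have hC1 : 1 ≤ C := by nlinarith
  have hconj : s.HolderConjugate q := by
    subst hq; exact (Real.holderConjugate_iff_eq_conjExponent hs1).2 rfl
  -- ν₀
  set ν₀ : ℝ := (2 * q) ^ q⁻¹ with hν₀def
  have hν₀C : ν₀ ≤ C := by
    have h1 : ν₀ = Real.exp (Real.log (2 * q) * q⁻¹) := by
      rw [hν₀def, Real.rpow_def_of_pos (by linarith)]
    have h2 : Real.log (2 * q) * q⁻¹ ≤ 2 := by
      have := Real.log_le_sub_one_of_pos (show (0:ℝ) < 2 * q by linarith)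
      have h3 : Real.log (2 * q) ≤ 2 * q := by linarith
      rw [← le_div_iff₀ (by positivity : (0:ℝ) < q⁻¹)] at *
      · calc Real.log (2*q) ≤ 2 * q := h3
          _ = 2 / q⁻¹ := by field_simp
    have h4 : Real.exp (Real.log (2*q) * q⁻¹) ≤ Real.exp 2 := Real.exp_le_exp.2 h2
    have h5 : Real.exp 2 ≤ C := by
      rw [hCdef]
      have h6 : Real.exp 2 ≤ Real.exp (3 ^ q + 1) := by
        apply Real.exp_le_exp.2
        have : (1:ℝ) ≤ 3 ^ q := Real.one_le_rpow (by norm_num) hq0.le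
        linarith
      nlinarith [Real.exp_pos (3 ^ q + 1)]
    rw [h1]; exact h4.trans h5
  have hCq2 : 2 ≤ C ^ q := by
    calc (2:ℝ) ≤ C := by nlinarith
      _ = C ^ (1:ℝ) := (Real.rpow_one C).symm
      _ ≤ C ^ q := Real.rpow_le_rpow_of_exponent_le hC1 (by linarith)
  -- rewrite the integrand
  have hrw : ∀ ω, ν * G ω / C = (ν / C) * G ω := fun ω => by ring
  simp only [hrw]
  set t : ℝ := ν / C with htdef
  rcases le_or_gt ν₀ (|ν|) with hbig | hsmall
  · -- large ν case
    set K : ℝ := (|ν| / C) ^ q / q with hKdef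
    have hpt : ∀ ω, Real.exp (t * G ω) ≤ Real.exp K * Real.exp (|G ω| ^ s) := by
      intro ω
      rw [← Real.exp_add]
      apply Real.exp_le_exp.2
      have hy : t * G ω ≤ |G ω| * (|ν| / C) := by
        calc t * G ω ≤ |t * G ω| := le_abs_self _
          _ = |G ω| * (|ν| / C) := by
              rw [abs_mul, htdef, abs_div, abs_of_pos hC0]; ring
      have hyoung := Real.young_inequality (|G ω|) (|ν| / C) hconj
      rw [abs_abs, abs_of_nonneg (by positivity : (0:ℝ) ≤ |ν| / C)] at hyoung
      have hss : |G ω| ^ s / s ≤ |G ω| ^ s :=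
        div_le_self (Real.rpow_nonneg (abs_nonneg _) s) (by linarith)
      calc t * G ω ≤ |G ω| * (|ν| / C) := hy
        _ ≤ |G ω| ^ s / s + (|ν| / C) ^ q / q := hyoung
        _ ≤ K + |G ω| ^ s := by rw [hKdef]; linarith
    have hInt : (∫ ω, Real.exp (t * G ω) ∂μ) ≤ Real.exp K * Real.exp 1 := by
      calc (∫ ω, Real.exp (t * G ω) ∂μ) ≤ ∫ ω, Real.exp K * Real.exp (|G ω| ^ s) ∂μ :=
            integral_mono (hint t) (hAint.const_mul _) hpt
        _ = Real.exp K * ∫ ω, Real.exp (|G ω| ^ s) ∂μ := integral_const_mul _ _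
        _ ≤ Real.exp K * Real.exp 1 := by
            apply mul_le_mul_of_nonneg_left hA (Real.exp_pos _).le
    rw [← Real.exp_add] at hInt
    apply hInt.trans
    apply Real.exp_le_exp.2
    apply le_max_of_le_right
    -- K + 1 ≤ |ν|^q / q
    have hAbig : 2 * q ≤ |ν| ^ q := by
      have h7 := Real.rpow_le_rpow (by positivity) hbig hq0.le
      rwa [hν₀def, Real.rpow_inv_rpow (by linarith) hq0.ne'] at h7
    have hdivC : (|ν| / C) ^ q = |ν| ^ q / C ^ q := Real.div_rpow (abs_nonneg _) hC0.le q
    have hCq0 : (0:ℝ) < C ^ q := by positivity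
    have h8 : |ν| ^ q / C ^ q ≤ |ν| ^ q / 2 := by
      gcongr
    have h9 : 1 ≤ |ν| ^ q / (2 * q) := (one_le_div (by linarith)).2 hAbig
    have h10 : |ν| ^ q / q = 2 * (|ν| ^ q / (2 * q)) := by
      field_simp
    rw [hKdef, hdivC]
    have h11 : |ν| ^ q / C ^ q / q ≤ |ν| ^ q / 2 / q := by gcongr
    have h12 : |ν| ^ q / 2 / q = |ν| ^ q / (2 * q) := by ring
    rw [h12] at h11
    linarith
  · -- small ν case
    have ht1 : |t| ≤ 1 := by
      rw [htdef, abs_div, abs_of_pos hC0, div_le_one hC0]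
      linarith
    have hpt : ∀ ω, Real.exp (t * G ω) ≤
        1 + t * G ω + t ^ 2 * Real.exp (3 ^ q) * Real.exp (|G ω| ^ s) := by
      intro ω
      have h1 := r_bound (t * G ω)
      have h2 : (t * G ω) ^ 2 * Real.exp (|t * G ω|) ≤
          t ^ 2 * Real.exp (3 ^ q) * Real.exp (|G ω| ^ s) := by
        have ha : |t * G ω| ≤ |G ω| := by
          rw [abs_mul]
          calc |t| * |G ω| ≤ 1 * |G ω| := mul_le_mul_of_nonneg_right ht1 (abs_nonneg _)
            _ = |G ω| := one_mul _
        have hb : (G ω) ^ 2 * Real.exp (|G ω|) ≤ Real.exp (3 ^ q) * Real.exp (|G ω| ^ s) := by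
          have hb1 : (G ω) ^ 2 ≤ Real.exp (|G ω|) ^ 2 := by
            rw [← sq_abs]
            exact pow_le_pow_left₀ (abs_nonneg _) (self_le_exp _) 2
          have hb2 : Real.exp (|G ω|) ^ 2 * Real.exp (|G ω|) = Real.exp (3 * |G ω|) := by
            rw [sq, ← Real.exp_add, ← Real.exp_add]; ring_nf
          have hb3 : 3 * |G ω| ≤ |G ω| ^ s + 3 ^ q :=
            lin_le_rpow hs1 hq (by norm_num) (abs_nonneg _)
          calc (G ω) ^ 2 * Real.exp (|G ω|) ≤ Real.exp (|G ω|) ^ 2 * Real.exp (|G ω|) :=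
                mul_le_mul_of_nonneg_right hb1 (Real.exp_pos _).le
            _ = Real.exp (3 * |G ω|) := hb2
            _ ≤ Real.exp (|G ω| ^ s + 3 ^ q) := Real.exp_le_exp.2 hb3
            _ = Real.exp (3 ^ q) * Real.exp (|G ω| ^ s) := by
                rw [← Real.exp_add]; ring_nf
        calc (t * G ω) ^ 2 * Real.exp (|t * G ω|) ≤ (t * G ω) ^ 2 * Real.exp (|G ω|) := by
              apply mul_le_mul_of_nonneg_left (Real.exp_le_exp.2 ha) (sq_nonneg _)
          _ = t ^ 2 * ((G ω) ^ 2 * Real.exp (|G ω|)) := by ring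
          _ ≤ t ^ 2 * (Real.exp (3 ^ q) * Real.exp (|G ω| ^ s)) :=
              mul_le_mul_of_nonneg_left hb (sq_nonneg _)
          _ = t ^ 2 * Real.exp (3 ^ q) * Real.exp (|G ω| ^ s) := by ring
      linarith
    have hRint : Integrable
        (fun ω => 1 + t * G ω + t ^ 2 * Real.exp (3 ^ q) * Real.exp (|G ω| ^ s)) μ := by
      exact ((integrable_const 1).add (hGint.const_mul t)).add (hAint.const_mul _)
    have hInt : (∫ ω, Real.exp (t * G ω) ∂μ) ≤ 1 + t ^ 2 * Real.exp (3 ^ q + 1) := by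
      calc (∫ ω, Real.exp (t * G ω) ∂μ)
          ≤ ∫ ω, (1 + t * G ω + t ^ 2 * Real.exp (3 ^ q) * Real.exp (|G ω| ^ s)) ∂μ :=
            integral_mono (hint t) hRint hpt
        _ = (∫ ω, (1 + t * G ω) ∂μ) +
              ∫ ω, t ^ 2 * Real.exp (3 ^ q) * Real.exp (|G ω| ^ s) ∂μ :=
            integral_add ((integrable_const 1).add (hGint.const_mul t)) (hAint.const_mul _)
        _ = 1 + t * (∫ ω, G ω ∂μ) + t ^ 2 * Real.exp (3 ^ q) * ∫ ω, Real.exp (|G ω| ^ s) ∂μ := by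
            rw [integral_add (integrable_const 1) (hGint.const_mul t), integral_const,
              integral_const_mul, integral_const_mul]
            simp [measure_univ]
        _ ≤ 1 + t ^ 2 * Real.exp (3 ^ q + 1) := by
            rw [hG0]
            have : t ^ 2 * Real.exp (3 ^ q) * (∫ ω, Real.exp (|G ω| ^ s) ∂μ) ≤
                t ^ 2 * Real.exp (3 ^ q) * Real.exp 1 := by
              apply mul_le_mul_of_nonneg_left hA (by positivity)
            rw [Real.exp_add]
            nlinarith
    apply hInt.trans
    have h13 : t ^ 2 * Real.exp (3 ^ q + 1) ≤ ν ^ 2 / 2 := by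
      have ht2 : t ^ 2 = ν ^ 2 / C ^ 2 := by rw [htdef, div_pow]
      rw [ht2, hCdef]
      rw [div_mul_eq_mul_div, div_le_div_iff₀ (by positivity) (by norm_num)]
      nlinarith [sq_nonneg ν, Real.exp_pos (3 ^ q + 1), sq_nonneg (ν * Real.exp (3 ^ q + 1))]
    calc 1 + t ^ 2 * Real.exp (3 ^ q + 1) ≤ 1 + ν ^ 2 / 2 := by linarith
      _ ≤ Real.exp (ν ^ 2 / 2) := by linarith [Real.add_one_le_exp (ν ^ 2 / 2)]
      _ ≤ Real.exp (max (ν ^ 2 / 2) (|ν| ^ q / q)) := Real.exp_le_exp.2 (le_max_left _ _)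



lemma tail_one {Ω : Type} [MeasurableSpace Ω] (μ : Measure Ω) [IsProbabilityMeasure μ]
    (G : Ω → ℝ) (hint : ∀ ν : ℝ, Integrable (fun ω => Real.exp (ν * G ω)) μ)
    (hB : ∀ ν : ℝ, 0 ≤ ν → Real.log (∫ ω, Real.exp (ν * G ω) ∂μ) ≤ max (ν ^ 2 / 2) (ν ^ q / q))
    {t : ℝ} (ht : 1 ≤ t) : (μ {ω | t ≤ G ω}).toReal ≤ Real.exp (-(t ^ s) / 2) := by
  have hq2 : 2 ≤ q := by rw [hq, le_div_iff₀ (by linarith)]; linarith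
  have ht0 : 0 < t := lt_of_lt_of_le one_pos ht
  set ν : ℝ := t ^ (s - 1) with hνdef
  have hν0 : 0 ≤ ν := Real.rpow_nonneg ht0.le _
  have key := ProbabilityTheory.measure_ge_le_exp_cgf (X := G) (μ := μ) (t := ν) t hν0 (hint ν)
  have hcgf : ProbabilityTheory.cgf G μ ν ≤ max (ν ^ 2 / 2) (ν ^ q / q) := by
    have h := hB ν hν0
    simpa [ProbabilityTheory.cgf, ProbabilityTheory.mgf] using h
  have hνt : ν * t = t ^ s := by
    rw [hνdef, ← Real.rpow_add_one ht0.ne' (s - 1)]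
    norm_num
  have hν2 : ν ^ 2 ≤ t ^ s := by
    have h1 : ν ^ 2 = t ^ ((s - 1) * 2) := by
      rw [hνdef, ← Real.rpow_natCast (t ^ (s - 1)) 2, ← Real.rpow_mul ht0.le]
      norm_num
    rw [h1]
    exact Real.rpow_le_rpow_of_exponent_le ht (by nlinarith)
  have hνq : ν ^ q = t ^ s := by
    rw [hνdef, ← Real.rpow_mul ht0.le]
    congr 1
    have hs10 : s - 1 ≠ 0 := by linarith
    rw [hq]; field_simp
  have hts0 : 0 ≤ t ^ s := Real.rpow_nonneg ht0.le s
  have hmax : max (ν ^ 2 / 2) (ν ^ q / q) ≤ t ^ s / 2 := by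
    apply max_le
    · linarith
    · rw [hνq]; gcongr
  calc (μ {ω | t ≤ G ω}).toReal ≤ Real.exp (-ν * t + ProbabilityTheory.cgf G μ ν) := key
    _ ≤ Real.exp (-(t ^ s) / 2) := by
        apply Real.exp_le_exp.2
        have : -ν * t = -(t ^ s) := by rw [neg_mul, hνt]
        linarith [hcgf.trans hmax]

lemma hard_dir {Ω : Type} [MeasurableSpace Ω] (μ : Measure Ω) [IsProbabilityMeasure μ]
    (G : Ω → ℝ) (hint : ∀ ν : ℝ, Integrable (fun ω => Real.exp (ν * G ω)) μ)
    (hGI : ∀ c : ℝ, 0 < c → Integrable (fun ω => Real.exp (|G ω / c| ^ s)) μ)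
    (hB : ∀ ν : ℝ, Real.log (∫ ω, Real.exp (ν * G ω) ∂μ) ≤ max (ν ^ 2 / 2) (|ν| ^ q / q)) :
    (∫ ω, Real.exp (|G ω / ((32 * s) ^ s⁻¹)| ^ s) ∂μ) ≤ Real.exp 1 := by
  have hs0 : (0:ℝ) < s := by linarith
  have hs0' : s ≠ 0 := hs0.ne'
  -- upper tail
  have htailG : ∀ t : ℝ, 1 ≤ t → (μ {ω | t ≤ G ω}).toReal ≤ Real.exp (-(t ^ s) / 2) := by
    intro t ht
    apply tail_one hs1 hs2 hq μ G hint _ ht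
    intro ν hν
    have := hB ν
    rwa [abs_of_nonneg hν] at this
  have htailG' : ∀ t : ℝ, 1 ≤ t → (μ {ω | t ≤ -G ω}).toReal ≤ Real.exp (-(t ^ s) / 2) := by
    intro t ht
    apply tail_one hs1 hs2 hq μ (fun ω => -G ω) (fun ν => ?_) (fun ν hν => ?_) ht
    · have := hint (-ν)
      apply this.congr
      · filter_upwards with ω; rw [show ν * -G ω = -ν * G ω by ring]
    · have h := hB (-ν)
      rw [abs_neg, abs_of_nonneg hν] at h
      have heq : (∫ ω, Real.exp (ν * -G ω) ∂μ) = ∫ ω, Real.exp (-ν * G ω) ∂μ := by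
        congr 1; funext ω; rw [show ν * -G ω = -ν * G ω by ring]
      rw [heq]
      convert h using 3
      ring
  -- the fixed-scale exponential moment
  set f₄ : Ω → ℝ := fun ω => Real.exp (|G ω| ^ s / (4 * s)) with hf₄def
  have hc₄ : (0:ℝ) < (4 * s) ^ s⁻¹ := Real.rpow_pos_of_pos (by linarith) _
  have hf₄eq : (fun ω => Real.exp (|G ω / ((4 * s) ^ s⁻¹)| ^ s)) = f₄ := by
    funext ω
    rw [hf₄def, abs_div, abs_of_pos hc₄, Real.div_rpow (abs_nonneg _) hc₄.le,
      Real.rpow_inv_rpow (by linarith) hs0']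
  have hf₄int : Integrable f₄ μ := hf₄eq ▸ hGI _ hc₄
  have hlc := hf₄int.integral_eq_integral_meas_lt
    (Filter.Eventually.of_forall fun ω => (Real.exp_pos _).le)
  set u₁ : ℝ := Real.exp (1 / (4 * s)) with hu₁def
  have hu₁1 : 1  ≤ u₁ := Real.one_le_exp (by positivity)
  have hu₁0 : 0 < u₁ := lt_of_lt_of_le one_pos hu₁1
  have hu₁43 : u₁ ≤ 4 / 3 := by
    have h1 : (3:ℝ)/4 ≤ Real.exp (-(1/4)) := by
      have := Real.add_one_le_exp (-(1/4) : ℝ); linarith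
    have h2 : u₁ ≤ Real.exp (1/4) := by
      rw [hu₁def]; apply Real.exp_le_exp.2; rw [div_le_div_iff₀ (by linarith) (by norm_num)]
      linarith
    have h3 : Real.exp (1/4) * Real.exp (-(1/4)) = 1 := by rw [← Real.exp_add]; norm_num
    nlinarith [Real.exp_pos ( (1:ℝ)/4), Real.exp_pos (-(1:ℝ)/4)]
  set h : ℝ → ℝ := fun u => if u ≤ u₁ then 1 else 2 * u ^ (-2 : ℝ) with hhdef
  -- pointwise bound on the tail function
  have hkey : ∀ u : ℝ, u ∈ Ioi (0:ℝ) → (μ {a | u < f₄ a}).toReal ≤ h u := by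
    intro u hu
    rcases le_or_gt u u₁ with hcase | hcase
    · rw [hhdef]; simp only [if_pos hcase]
      calc (μ {a | u < f₄ a}).toReal ≤ (μ univ).toReal :=
        ENNReal.toReal_mono (measure_ne_top μ _) (measure_mono (subset_univ _))
        _ = 1 := by simp
    · have hu1 : 1 < u := lt_of_le_of_lt hu₁1 hcase
      have hlogu : 1 / (4 * s) < Real.log u := by
        rw [Real.lt_log_iff_exp_lt (by linarith)]; exact hu₁def ▸ hcase
      have hlogu0 : 0 < Real.log u := lt_trans (by positivity) hlogu
      set t : ℝ := (4 * s * Real.log u) ^ s⁻¹ with htdef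
      have hst : (0:ℝ) < 4 * s * Real.log u := by positivity
      have hts : t ^ s = 4 * s * Real.log u := Real.rpow_inv_rpow hst.le hs0'
      have ht1 : 1 ≤ t := by
        apply Real.one_le_rpow _ (by positivity)
        have h4 : (4 * s) * (1 / (4 * s)) ≤ 4 * s * Real.log u :=
          mul_le_mul_of_nonneg_left hlogu.le (by linarith)
        rw [mul_one_div, div_self (by positivity : (4:ℝ) * s ≠ 0)] at h4
        exact h4
      have hsub : {a | u < f₄ a} ⊆ {a | t ≤ G a} ∪ {a | t ≤ -G a} := by
        intro a ha
        simp only [mem_setOf_eq, hf₄def] at ha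
        have h5 : Real.log u < |G a| ^ s / (4 * s) :=
          (Real.log_lt_iff_lt_exp (by linarith)).2 ha
        have h6 : 4 * s * Real.log u < |G a| ^ s := by
          rw [lt_div_iff₀ (by positivity)] at h5; linarith [h5]
        have h7 : t ≤ |G a| := by
          calc t = (4 * s * Real.log u) ^ s⁻¹ := rfl
            _ ≤ (|G a| ^ s) ^ s⁻¹ := Real.rpow_le_rpow hst.le h6.le (by positivity)
            _ = |G a| := Real.rpow_rpow_inv (abs_nonneg _) hs0'
        rcases le_abs.1 h7 with h8 | h8
        · exact Or.inl h8
        · exact Or.inr h8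
      have hm : (μ {a | u < f₄ a}).toReal ≤
          (μ {a | t ≤ G a}).toReal + (μ {a | t ≤ -G a}).toReal := by
        have h9 : μ {a | u < f₄ a} ≤ μ {a | t ≤ G a} + μ {a | t ≤ -G a} :=
          le_trans (measure_mono hsub) (measure_union_le _ _)
        have h10 := ENNReal.toReal_mono
          (ENNReal.add_ne_top.2 ⟨measure_ne_top μ _, measure_ne_top μ _⟩) h9
        rwa [ENNReal.toReal_add (measure_ne_top μ _) (measure_ne_top μ _)] at h10
      have hexp : Real.exp (-(t ^ s) / 2) = u ^ (-(2 * s)) := by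
        rw [hts, Real.rpow_def_of_pos (by linarith : (0:ℝ) < u)]
        congr 1; ring
      have h11 : (μ {a | u < f₄ a}).toReal ≤ 2 * u ^ (-(2 * s)) := by
        rw [← hexp]
        calc (μ {a | u < f₄ a}).toReal ≤ _ + _ := hm
          _ ≤ Real.exp (-(t ^ s) / 2) + Real.exp (-(t ^ s) / 2) :=
            add_le_add (htailG t ht1) (htailG' t ht1)
          _ = 2 * Real.exp (-(t ^ s) / 2) := by ring
      rw [hhdef]; simp only [if_neg (not_le.2 hcase)]
      apply h11.trans
      have : u ^ (-(2 * s)) ≤ u ^ (-2 : ℝ) :=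
        Real.rpow_le_rpow_of_exponent_le hu1.le (by linarith)
      linarith
  -- integrability of h on Ioi 0
  have hI1 : IntegrableOn h (Ioc 0 u₁) volume := by
    have hconst : IntegrableOn (fun _ : ℝ => (1:ℝ)) (Ioc 0 u₁) volume :=
      integrableOn_const measure_Ioc_lt_top.ne
    exact hconst.congr_fun (fun u hu => by rw [hhdef]; simp only [if_pos hu.2])
      measurableSet_Ioc
  have hI2 : IntegrableOn h (Ioi u₁) volume := by
    have hrpow : IntegrableOn (fun u : ℝ => 2 * u ^ (-2:ℝ)) (Ioi u₁) volume :=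
      (integrableOn_Ioi_rpow_of_lt (by norm_num : (-2:ℝ) < -1) hu₁0).const_mul 2
    exact hrpow.congr_fun (fun u hu => by rw [hhdef]; simp only [if_neg (not_le.2 (show u₁ < u from hu))])
      measurableSet_Ioi
  have hunion : Ioc (0:ℝ) u₁ ∪ Ioi u₁ = Ioi 0 := Ioc_union_Ioi_eq_Ioi hu₁0.le
  have hIh : IntegrableOn h (Ioi 0) volume := by
    rw [← hunion]; exact hI1.union hI2
  -- conclude the moment bound
  have hK4 : (∫ ω, f₄ ω ∂μ) ≤ 4 := by
    rw [hlc]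
    have hmono : (∫ u in Ioi (0:ℝ), (μ {a | u < f₄ a}).toReal) ≤ ∫ u in Ioi (0:ℝ), h u := by
      apply integral_mono_of_nonneg
      · exact Filter.Eventually.of_forall fun u => ENNReal.toReal_nonneg
      · exact hIh
      · exact (ae_restrict_iff' measurableSet_Ioi).2 (Filter.Eventually.of_forall hkey)
    apply hmono.trans
    have hsplit : (∫ u in Ioi (0:ℝ), h u) = (∫ u in Ioc (0:ℝ) u₁, h u) + ∫ u in Ioi u₁, h u := by
      rw [← hunion]
      exact setIntegral_union (Ioc_disjoint_Ioi le_rfl) measurableSet_Ioi hI1 hI2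
    have hval1 : (∫ u in Ioc (0:ℝ) u₁, h u) = u₁ := by
      rw [setIntegral_congr_fun measurableSet_Ioc
        (fun u hu => by rw [hhdef]; simp only [if_pos hu.2] : EqOn h (fun _ => (1:ℝ)) _)]
      simp [Real.volume_Ioc, hu₁0.le]
    have hval2 : (∫ u in Ioi u₁, h u) = 2 * u₁⁻¹ := by
      rw [setIntegral_congr_fun measurableSet_Ioi
        (fun u hu => by rw [hhdef]; simp only [if_neg (not_le.2 (show u₁ < u from hu))] :
          EqOn h (fun u => 2 * u ^ (-2:ℝ)) _)]
      rw [integral_const_mul, integral_Ioi_rpow_of_lt (by norm_num) hu₁0]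
      norm_num [Real.rpow_neg_one]
    rw [hsplit, hval1, hval2]
    have hinv : u₁⁻¹ ≤ 1 := by
      rw [inv_le_one_iff₀]; right; exact hu₁1
    linarith
  -- final pointwise comparison at scale C₂
  set C₂ : ℝ := (32 * s) ^ s⁻¹ with hC₂def
  have hC₂0 : (0:ℝ) < C₂ := Real.rpow_pos_of_pos (by linarith) _
  have hC₂s : C₂ ^ s = 32 * s := Real.rpow_inv_rpow (by linarith) hs0'
  have hpt : ∀ ω, Real.exp (|G ω / C₂| ^ s) ≤ 1 + 4⁻¹ * f₄ ω := by
    intro ω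
    set u : ℝ := |G ω| ^ s with hudef
    have hu0 : 0 ≤ u := Real.rpow_nonneg (abs_nonneg _) s
    have habs : |G ω / C₂| ^ s = u / (32 * s) := by
      rw [abs_div, abs_of_pos hC₂0, Real.div_rpow (abs_nonneg _) hC₂0.le, hC₂s]
    set X : ℝ := u / (32 * s) with hXdef
    have hX0 : 0 ≤ X := by positivity
    have h1 : Real.exp X ≤ 1 + X * Real.exp X := exp_le_one_add_mul_exp hX0
    have e48 : u / (8 * s) = 4 * X := by rw [hXdef]; field_simp; ring
    have e44 : u / (4 * s) = 8 * X := by rw [hXdef]; field_simp; ring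
    have e1 : u ≤ 8 * s * Real.exp (4 * X) := by
      have h' : u / (8 * s) ≤ Real.exp (4 * X) := by
        calc u / (8 * s) = 4 * X := e48
          _ ≤ Real.exp (4 * X) := self_le_exp _
      calc u = 8 * s * (u / (8 * s)) := by field_simp
        _ ≤ 8 * s * Real.exp (4 * X) := mul_le_mul_of_nonneg_left h' (by linarith)
    have e2 : X * Real.exp X ≤ 4⁻¹ * Real.exp (4 * X) * Real.exp X := by
      have hXe : X = u / (32 * s) := hXdef
      have : X ≤ 4⁻¹ * Real.exp (4 * X) := by
        rw [hXe]
        rw [div_le_iff₀ (by positivity : (0:ℝ) < 32 * s)]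
        calc u ≤ 8 * s * Real.exp (4 * X) := e1
          _ = 4⁻¹ * Real.exp (4 * X) * (32 * s) := by ring
      exact mul_le_mul_of_nonneg_right this (Real.exp_pos _).le
    have e3 : Real.exp (4 * X) * Real.exp X ≤ Real.exp (8 * X) := by
      rw [← Real.exp_add]
      apply Real.exp_le_exp.2
      linarith
    have e4 : X * Real.exp X ≤ 4⁻¹ * f₄ ω := by
      calc X * Real.exp X ≤ 4⁻¹ * Real.exp (4 * X) * Real.exp X := e2
        _ = 4⁻¹ * (Real.exp (4 * X) * Real.exp X) := by ring
        _ ≤ 4⁻¹ * Real.exp (8 * X) := by linarith [e3]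
        _ = 4⁻¹ * f₄ ω := by rw [hf₄def, ← e44]
    calc Real.exp (|G ω / C₂| ^ s) = Real.exp X := by rw [habs]
      _ ≤ 1 + X * Real.exp X := h1
      _ ≤ 1 + 4⁻¹ * f₄ ω := by linarith
  calc (∫ ω, Real.exp (|G ω / C₂| ^ s) ∂μ) ≤ ∫ ω, (1 + 4⁻¹ * f₄ ω) ∂μ :=
      integral_mono (hGI C₂ hC₂0) ((integrable_const 1).add (hf₄int.const_mul _)) hpt
    _ = 1 + 4⁻¹ * ∫ ω, f₄ ω ∂μ := by
        rw [integral_add (integrable_const 1) (hf₄int.const_mul _), integral_const,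
          integral_const_mul]
        simp
    _ ≤ 1 + 4⁻¹ * 4 := by
        have h4 : 4⁻¹ * (∫ ω, f₄ ω ∂μ) ≤ 4⁻¹ * 4 := by
          apply mul_le_mul_of_nonneg_left hK4 (by norm_num)
        linarith
    _ ≤ Real.exp 1 := by
        have := Real.add_one_le_exp (1:ℝ); norm_num; linarith


end OrliczAux

/-- For `1 < s ≤ 2`, `s* = s/(s−1)`, and centered `F`, the Orlicz norm
`inf{M > 0 : log E[exp(|F/M|^s)] ≤ 1}` is comparable (with constants depending only on `s`)
to `inf{M > 0 : ∀ν, log E[exp(νF/M)] ≤ max{ν²/2, |ν|^{s*}/s*}}`. -/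
theorem stmt_19 (s : ℝ) (hs1 : 1 < s) (hs2 : s ≤ 2) :
    ∃ C : ℝ, 0 < C ∧
      ∀ {Ω : Type} [MeasurableSpace Ω] (μ : Measure Ω) [IsProbabilityMeasure μ]
        (F : Ω → ℝ),
        Integrable F μ → (∫ ω, F ω ∂μ) = 0 →
        (∀ ν : ℝ, Integrable (fun ω => Real.exp (ν * F ω)) μ) →
        (∀ M : ℝ, 0 < M → Integrable (fun ω => Real.exp (|F ω / M| ^ s)) μ) →
        (sInf {M : ℝ | 0 < M ∧
            Real.log (∫ ω, Real.exp (|F ω / M| ^ s) ∂μ) ≤ 1} ≤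
          C * sInf {M : ℝ | 0 < M ∧ ∀ ν : ℝ,
            Real.log (∫ ω, Real.exp (ν * F ω / M) ∂μ) ≤
              max (ν ^ 2 / 2) (|ν| ^ (s / (s - 1)) / (s / (s - 1)))}) ∧
        (sInf {M : ℝ | 0 < M ∧ ∀ ν : ℝ,
            Real.log (∫ ω, Real.exp (ν * F ω / M) ∂μ) ≤
              max (ν ^ 2 / 2) (|ν| ^ (s / (s - 1)) / (s / (s - 1)))} ≤
          C * sInf {M : ℝ | 0 < M ∧
            Real.log (∫ ω, Real.exp (|F ω / M| ^ s) ∂μ) ≤ 1}) := by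
  have hs0 : (0:ℝ) < s := by linarith
  set q : ℝ := s / (s - 1) with hqdef
  set C₁ : ℝ := 2 * Real.exp (3 ^ q + 1) with hC₁def
  set C₂ : ℝ := (32 * s) ^ s⁻¹ with hC₂def
  have hC₁0 : 0 < C₁ := by positivity
  have hC₂0 : 0 < C₂ := Real.rpow_pos_of_pos (by linarith) _
  refine ⟨max C₁ C₂, lt_max_of_lt_left hC₁0, ?_⟩
  intro Ω _ μ _ F hFint hF0 hexp hOrl
  set C : ℝ := max C₁ C₂ with hCdef
  have hC0 : 0 < C := lt_max_of_lt_left hC₁0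
  set A : Set ℝ := {M : ℝ | 0 < M ∧
      Real.log (∫ ω, Real.exp (|F ω / M| ^ s) ∂μ) ≤ 1} with hAdef
  set B : Set ℝ := {M : ℝ | 0 < M ∧ ∀ ν : ℝ,
      Real.log (∫ ω, Real.exp (ν * F ω / M) ∂μ) ≤
        max (ν ^ 2 / 2) (|ν| ^ q / q)} with hBdef
  have hposA : ∀ M : ℝ, 0 < M → 0 < ∫ ω, Real.exp (|F ω / M| ^ s) ∂μ :=
    fun M hM => integral_exp_pos (hOrl M hM)
  have hint' : ∀ c : ℝ, c ≠ 0 → ∀ ν : ℝ,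
      Integrable (fun ω => Real.exp (ν * F ω / c)) μ := by
    intro c hc ν
    apply (hexp (ν / c)).congr
    filter_upwards with ω
    rw [show ν / c * F ω = ν * F ω / c by ring]
  -- step 1 : A-membership scales to B-membership
  have step1 : ∀ M : ℝ, M ∈ A → C₁ * M ∈ B := by
    intro M hMA
    obtain ⟨hM, hlogA⟩ := hMA
    have hA' : (∫ ω, Real.exp (|F ω / M| ^ s) ∂μ) ≤ Real.exp 1 :=
      (Real.log_le_iff_le_exp (hposA M hM)).1 hlogA
    refine ⟨by positivity, fun ν => ?_⟩
    have key := easy_dir hs1 hs2 hqdef μ (fun ω => F ω / M)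
      (hFint.div_const M)
      (by rw [integral_div, hF0]; simp)
      (fun ν' => by
        apply (hexp (ν' / M)).congr
        filter_upwards with ω
        rw [show ν' / M * F ω = ν' * (F ω / M) by ring])
      (hOrl M hM) hA' ν
    have heq : (∫ ω, Real.exp (ν * (F ω / M) / (2 * Real.exp (3 ^ q + 1))) ∂μ) =
        ∫ ω, Real.exp (ν * F ω / (C₁ * M)) ∂μ := by
      congr 1; funext ω
      rw [hC₁def, show ν * (F ω / M) / (2 * Real.exp (3 ^ q + 1)) =
        ν * F ω / (2 * Real.exp (3 ^ q + 1) * M) by ring]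
    rw [heq] at key
    exact (Real.log_le_iff_le_exp (integral_exp_pos (hint' _ (by positivity) ν))).2 key
  -- step 2 : B-membership scales to A-membership
  have step2 : ∀ M : ℝ, M ∈ B → C₂ * M ∈ A := by
    intro M hMB
    obtain ⟨hM, hlogB⟩ := hMB
    have key := hard_dir hs1 hs2 hqdef μ (fun ω => F ω / M)
      (fun ν' => by
        apply (hexp (ν' / M)).congr
        filter_upwards with ω
        rw [show ν' / M * F ω = ν' * (F ω / M) by ring])
      (fun c hc => by
        apply (hOrl (M * c) (by positivity)).congr
        filter_upwards with ω
        rw [div_div])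
      (fun ν => by
        have h := hlogB ν
        have heq : (∫ ω, Real.exp (ν * (F ω / M)) ∂μ) =
            ∫ ω, Real.exp (ν * F ω / M) ∂μ := by
          congr 1; funext ω; rw [mul_div_assoc]
        rw [heq]; exact h)
    have heq2 : (∫ ω, Real.exp (|(F ω / M) / ((32 * s) ^ s⁻¹)| ^ s) ∂μ) =
        ∫ ω, Real.exp (|F ω / (C₂ * M)| ^ s) ∂μ := by
      congr 1; funext ω
      rw [div_div, hC₂def, mul_comm M _]
    rw [heq2] at key
    exact ⟨by positivity, (Real.log_le_iff_le_exp (hposA _ (by positivity))).2 key⟩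
  -- A is nonempty by dominated convergence
  have hAne : A.Nonempty := by
    have hlim : Filter.Tendsto (fun n : ℕ => ∫ ω, Real.exp (|F ω / ((n : ℝ) + 1)| ^ s) ∂μ)
        Filter.atTop (nhds 1) := by
      have h1 : Filter.Tendsto (fun n : ℕ => ∫ ω, Real.exp (|F ω / ((n : ℝ) + 1)| ^ s) ∂μ)
          Filter.atTop (nhds (∫ _ω, (1:ℝ) ∂μ)) := by
        apply tendsto_integral_of_dominated_convergence (fun ω => Real.exp (|F ω| ^ s))
        · exact fun n => (hOrl ((n:ℝ)+1) (by positivity)).1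
        · exact hOrl 1 one_pos |>.congr (by
            filter_upwards with ω; rw [div_one])
        · intro n
          filter_upwards with ω
          rw [Real.norm_eq_abs, abs_of_pos (Real.exp_pos _)]
          apply Real.exp_le_exp.2
          apply Real.rpow_le_rpow (abs_nonneg _) _ hs0.le
          rw [abs_div]
          calc |F ω| / |(n:ℝ) + 1| = |F ω| / ((n:ℝ) + 1) := by
                rw [abs_of_pos (by positivity : (0:ℝ) < (n:ℝ)+1)]
            _ ≤ |F ω| / 1 := by
                apply div_le_div_of_nonneg_left (abs_nonneg _) one_pos
                · simp
            _ = |F ω| := div_one _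
        · filter_upwards with ω
          have h2 : Filter.Tendsto (fun n : ℕ => |F ω / ((n:ℝ) + 1)| ^ s)
              Filter.atTop (nhds 0) := by
            have h3 : (fun n : ℕ => |F ω / ((n:ℝ) + 1)| ^ s) =
                fun n : ℕ => |F ω| ^ s / ((n:ℝ) + 1) ^ s := by
              funext n
              rw [abs_div, abs_of_pos (by positivity : (0:ℝ) < (n:ℝ)+1),
                Real.div_rpow (abs_nonneg _) (by positivity)]
            rw [h3]
            apply Filter.Tendsto.div_atTop tendsto_const_nhds
            apply (tendsto_rpow_atTop hs0).comp
            exact Filter.tendsto_atTop_add_const_right _ 1 tendsto_natCast_atTop_atTop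
          have := (Real.continuous_exp.tendsto 0).comp h2
          rw [Real.exp_zero] at this; exact this
      simpa using h1
    have hev : ∀ᶠ n : ℕ in Filter.atTop,
        (∫ ω, Real.exp (|F ω / ((n : ℝ) + 1)| ^ s) ∂μ) < Real.exp 1 := by
      apply hlim.eventually_lt_const
      linarith [Real.add_one_le_exp (1:ℝ)]
    obtain ⟨n, hn⟩ := hev.exists
    exact ⟨(n:ℝ) + 1, by positivity,
      (Real.log_le_iff_le_exp (hposA _ (by positivity))).2 hn.le⟩
  have hBne : B.Nonempty := by
    obtain ⟨M, hM⟩ := hAne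
    exact ⟨C₁ * M, step1 M hM⟩
  have hbddA : BddBelow A := ⟨0, fun M hM => hM.1.le⟩
  have hbddB : BddBelow B := ⟨0, fun M hM => hM.1.le⟩
  constructor
  · -- sInf A ≤ C * sInf B
    rw [← div_le_iff₀' hC0]
    apply le_csInf hBne
    intro M hMB
    rw [div_le_iff₀' hC0]
    calc sInf A ≤ C₂ * M := csInf_le hbddA (step2 M hMB)
      _ ≤ C * M := by
          apply mul_le_mul_of_nonneg_right (le_max_right _ _) hMB.1.le
  · -- sInf B ≤ C * sInf A
    rw [← div_le_iff₀' hC0]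
    apply le_csInf hAne
    intro M hMA
    rw [div_le_iff₀' hC0]
    calc sInf B ≤ C₁ * M := csInf_le hbddB (step1 M hMA)
      _ ≤ C * M := by
          apply mul_le_mul_of_nonneg_right (le_max_left _ _) hMA.1.le
end
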